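/- arXiv:1311.0924 — 3 statements merged into one kernel-verified Lean document; each statement's English description precedes it below -/
import Mathlib

section
/- Suppose the true valuations v_1, …, v_n of all n agents satisfy the gross substitutes (GS) condition. Then for every English Walrasian mechanism with bid space 𝓑 equal to the set of GS valuations, there exists a bid profile b ∈ 𝓑^n that is a pure Nash equilibrium for v, in which every bid b_i is a non-exposure bid, and whose allocation achieves the optimal welfare: ∑_i v_i(X_i(b)) = OPT(v). In particular, the price of stability of the English Walrasian mechanism for GS valuations is 1. -/
open Finset

/-- A valuation on `m` items: normalized at `∅`, monotone, nonnegative. -/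
def IsValuation {m : ℕ} (v : Finset (Fin m) → ℝ) : Prop :=
  v ∅ = 0 ∧ (∀ S T : Finset (Fin m), S ⊆ T → v S ≤ v T) ∧ (∀ S, 0 ≤ v S)

/-- `S` is in the demand set of valuation `v` at prices `p`. -/
def InDemand {m : ℕ} (v : Finset (Fin m) → ℝ) (p : Fin m → ℝ) (S : Finset (Fin m)) : Prop :=
  ∀ T : Finset (Fin m), v T - ∑ j ∈ T, p j ≤ v S - ∑ j ∈ S, p j

/-- Gross substitutes valuations. -/
def IsGS {m : ℕ} (v : Finset (Fin m) → ℝ) : Prop :=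
  IsValuation v ∧
    ∀ p q : Fin m → ℝ, (∀ j, p j ≤ q j) →
      ∀ S : Finset (Fin m), InDemand v p S →
        ∃ T : Finset (Fin m), InDemand v q T ∧ ∀ j ∈ S, p j = q j → j ∈ T

/-- Additive valuations. -/
def IsAdditive {m : ℕ} (v : Finset (Fin m) → ℝ) : Prop :=
  ∃ w : Fin m → ℝ, (∀ j, 0 ≤ w j) ∧ ∀ S : Finset (Fin m), v S = ∑ j ∈ S, w j

/-- XOS valuations: a max over a nonempty finite family of nonnegative additive valuations. -/
def IsXOS {m : ℕ} (v : Finset (Fin m) → ℝ) : Prop :=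
  ∃ (k : ℕ) (w : Fin (k + 1) → Fin m → ℝ),
    (∀ i j, 0 ≤ w i j) ∧
    ∀ S : Finset (Fin m),
      v S = Finset.univ.sup' Finset.univ_nonempty (fun i => ∑ j ∈ S, w i j)

def GSvals (m : ℕ) : Set (Finset (Fin m) → ℝ) := {u | IsGS u}
def XOSvals (m : ℕ) : Set (Finset (Fin m) → ℝ) := {u | IsXOS u}

/-- The welfare `W^b(S)`: the maximum of `∑ i, b i (X i)` over allocations (pairwise disjoint
tuples of subsets) contained in `S`. -/
noncomputable def W {n m : ℕ} (b : Fin n → Finset (Fin m) → ℝ) (S : Finset (Fin m)) : ℝ :=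
  sSup {t : ℝ | ∃ X : Fin n → Finset (Fin m),
    (∀ i j : Fin n, i ≠ j → Disjoint (X i) (X j)) ∧ (∀ i, X i ⊆ S) ∧ t = ∑ i, b i (X i)}

/-- The welfare `W^{b₋ᵢ}(S)` with agent `i` omitted. -/
noncomputable def Wminus {n m : ℕ} (b : Fin n → Finset (Fin m) → ℝ) (i : Fin n)
    (S : Finset (Fin m)) : ℝ :=
  sSup {t : ℝ | ∃ X : Fin n → Finset (Fin m),
    (∀ k l : Fin n, k ≠ l → Disjoint (X k) (X l)) ∧ (∀ k, X k ⊆ S) ∧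
    t = ∑ k ∈ Finset.univ.erase i, b k (X k)}

/-- The welfare `W^b(x)` for a multiplicity vector `x : Fin m → ℕ`: maximum of `∑ i, b i (X i)`
over tuples of sets in which each item `j` is used at most `x j` times. -/
noncomputable def Wmult {n m : ℕ} (b : Fin n → Finset (Fin m) → ℝ) (x : Fin m → ℕ) : ℝ :=
  sSup {t : ℝ | ∃ X : Fin n → Finset (Fin m),
    (∀ j : Fin m, (Finset.univ.filter fun i => j ∈ X i).card ≤ x j) ∧ t = ∑ i, b i (X i)}

/-- The optimal welfare for the true valuations. -/
noncomputable def OPT {n m : ℕ} (v : Fin n → Finset (Fin m) → ℝ) : ℝ := W v Finset.univ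

/-- A mechanism: allocation and payment maps on bid profiles. -/
structure Mechanism (n m : ℕ) where
  alloc : (Fin n → Finset (Fin m) → ℝ) → Fin n → Finset (Fin m)
  pay : (Fin n → Finset (Fin m) → ℝ) → Fin n → ℝ

/-- A bid profile lies in the bid space `B`. -/
def InBidSpace {n m : ℕ} (B : Set (Finset (Fin m) → ℝ))
    (b : Fin n → Finset (Fin m) → ℝ) : Prop :=
  ∀ i, b i ∈ B

/-- On bid profiles from `B`, the allocation is pairwise disjoint. -/
def AllocDisjoint {n m : ℕ} (M : Mechanism n m) (B : Set (Finset (Fin m) → ℝ)) : Prop :=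
  ∀ b, InBidSpace B b → ∀ i j : Fin n, i ≠ j → Disjoint (M.alloc b i) (M.alloc b j)

/-- On bid profiles from `B`, payments are nonnegative. -/
def PayNonneg {n m : ℕ} (M : Mechanism n m) (B : Set (Finset (Fin m) → ℝ)) : Prop :=
  ∀ b, InBidSpace B b → ∀ i, 0 ≤ M.pay b i

/-- The utility of agent `i` with true valuation `v` under bid profile `b`. -/
noncomputable def util {n m : ℕ} (M : Mechanism n m) (v : Finset (Fin m) → ℝ) (i : Fin n)
    (b : Fin n → Finset (Fin m) → ℝ) : ℝ :=
  v (M.alloc b i) - M.pay b i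

/-- Declared welfare maximizer. -/
def IsDWM {n m : ℕ} (M : Mechanism n m) (B : Set (Finset (Fin m) → ℝ)) : Prop :=
  (∀ b, InBidSpace B b → ∑ i, b i (M.alloc b i) = W b Finset.univ) ∧
  (∀ b, InBidSpace B b → ∀ i, M.pay b i ≤ b i (M.alloc b i)) ∧
  (∀ b, InBidSpace B b → ∀ i : Fin n, ∃ b' : Fin n → Finset (Fin m) → ℝ,
    InBidSpace B b' ∧ b' i = b i ∧ M.alloc b' i = M.alloc b i ∧
    M.pay b' i = b i (M.alloc b i))

/-- English Walrasian mechanism: welfare-maximizing allocation w.r.t. the bids, with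
payments given by the minimum Walrasian prices `W^b(𝟙 + e_j) − W^b(𝟙)`. -/
def IsEnglish {n m : ℕ} (M : Mechanism n m) (B : Set (Finset (Fin m) → ℝ)) : Prop :=
  (∀ b, InBidSpace B b → ∑ i, b i (M.alloc b i) = W b Finset.univ) ∧
  (∀ b, InBidSpace B b → ∀ i, M.pay b i =
    ∑ j ∈ M.alloc b i,
      (Wmult b (fun k => if k = j then 2 else 1) - Wmult b (fun _ => 1)))

/-- VCG mechanism: welfare-maximizing allocation w.r.t. the bids, with externality payments. -/
def IsVCG {n m : ℕ} (M : Mechanism n m) (B : Set (Finset (Fin m) → ℝ)) : Prop :=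
  (∀ b, InBidSpace B b → ∑ i, b i (M.alloc b i) = W b Finset.univ) ∧
  (∀ b, InBidSpace B b → ∀ i, M.pay b i =
    Wminus b i Finset.univ - Wminus b i (Finset.univ \ M.alloc b i))

/-- Bid `bi` of agent `i` with true valuation `v` has exposure factor `γ`. -/
def HasExposureFactor {n m : ℕ} (M : Mechanism n m) (B : Set (Finset (Fin m) → ℝ))
    (v : Finset (Fin m) → ℝ) (i : Fin n) (bi : Finset (Fin m) → ℝ) (γ : ℝ) : Prop :=
  ∀ b : Fin n → Finset (Fin m) → ℝ, InBidSpace B b → b i = bi →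
    M.pay b i ≤ (1 + γ) * v (M.alloc b i)

/-- `b` is a pure Nash equilibrium for true valuations `v`. -/
noncomputable def IsNash {n m : ℕ} (M : Mechanism n m) (B : Set (Finset (Fin m) → ℝ))
    (v b : Fin n → Finset (Fin m) → ℝ) : Prop :=
  InBidSpace B b ∧
  ∀ i : Fin n, ∀ bi' ∈ B, util M (v i) i (Function.update b i bi') ≤ util M (v i) i b

/-- A finitely supported probability distribution. -/
structure FinDist (α : Type*) where
  supp : Finset α
  μ : α → ℝ
  nonneg : ∀ a, 0 ≤ μ a
  sum_one : ∑ a ∈ supp, μ a = 1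

/-- Expectation of `f` under a finitely supported distribution. -/
noncomputable def FinDist.exp {α : Type*} (D : FinDist α) (f : α → ℝ) : ℝ :=
  ∑ a ∈ D.supp, D.μ a * f a

/-- Bayes-Nash equilibrium: strategies map types in `V` to bids in `B`, and no unilateral
deviation (depending only on the agent's own type) improves expected utility. -/
noncomputable def IsBNE {n m : ℕ} (M : Mechanism n m) (V B : Set (Finset (Fin m) → ℝ))
    (D : FinDist (Fin n → Finset (Fin m) → ℝ))
    (s : Fin n → (Finset (Fin m) → ℝ) → Finset (Fin m) → ℝ) : Prop :=
  (∀ i : Fin n, ∀ vi ∈ V, s i vi ∈ B) ∧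
  ∀ i : Fin n, ∀ s' : (Finset (Fin m) → ℝ) → Finset (Fin m) → ℝ, (∀ vi ∈ V, s' vi ∈ B) →
    D.exp (fun v => util M (v i) i (Function.update (fun k => s k (v k)) i (s' (v i)))) ≤
    D.exp (fun v => util M (v i) i (fun k => s k (v k)))

/-- Strategy `si` of agent `i` has exposure factor `γ` under distribution `D`. -/
noncomputable def BayesExposure {n m : ℕ} (M : Mechanism n m)
    (V B : Set (Finset (Fin m) → ℝ)) (D : FinDist (Fin n → Finset (Fin m) → ℝ)) (i : Fin n)
    (si : (Finset (Fin m) → ℝ) → Finset (Fin m) → ℝ) (γ : ℝ) : Prop :=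
  ∀ c : (Finset (Fin m) → ℝ) → Fin n → Finset (Fin m) → ℝ,
    (∀ vi ∈ V, InBidSpace B (c vi) ∧ c vi i = si vi) →
    D.exp (fun v => M.pay (c (v i)) i) ≤
      (1 + γ) * D.exp (fun v => (v i) (M.alloc (c (v i)) i))

namespace EngProof

open Finset

variable {n m : ℕ}

lemma welfare_set_finite (P : (Fin n → Finset (Fin m)) → Prop)
    (f : (Fin n → Finset (Fin m)) → ℝ) :
    {t : ℝ | ∃ X, P X ∧ t = f X}.Finite := by
  apply (Set.finite_range f).subset
  rintro t ⟨X, _, rfl⟩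
  exact ⟨X, rfl⟩

lemma Wmult_le (b : Fin n → Finset (Fin m) → ℝ) (x : Fin m → ℕ)
    (X : Fin n → Finset (Fin m))
    (hX : ∀ j : Fin m, (Finset.univ.filter fun i => j ∈ X i).card ≤ x j) :
    ∑ i, b i (X i) ≤ Wmult b x :=
  le_csSup (welfare_set_finite _ _).bddAbove ⟨X, hX, rfl⟩

lemma Wmult_attained (b : Fin n → Finset (Fin m) → ℝ) (x : Fin m → ℕ) :
    ∃ X : Fin n → Finset (Fin m),
      (∀ j : Fin m, (Finset.univ.filter fun i => j ∈ X i).card ≤ x j) ∧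
      Wmult b x = ∑ i, b i (X i) := by
  have hne : {t : ℝ | ∃ X : Fin n → Finset (Fin m),
      (∀ j : Fin m, (Finset.univ.filter fun i => j ∈ X i).card ≤ x j) ∧
      t = ∑ i, b i (X i)}.Nonempty := by
    refine ⟨∑ i, b i ((fun _ => (∅ : Finset (Fin m))) i), ⟨fun _ => ∅, fun j => ?_, rfl⟩⟩
    simp
  have := hne.csSup_mem (welfare_set_finite _ _)
  obtain ⟨X, hX, hval⟩ := this
  exact ⟨X, hX, hval⟩

lemma W_set_finite (b : Fin n → Finset (Fin m) → ℝ) (S : Finset (Fin m)) :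
    {t : ℝ | ∃ X : Fin n → Finset (Fin m),
      (∀ i j : Fin n, i ≠ j → Disjoint (X i) (X j)) ∧ (∀ i, X i ⊆ S) ∧
      t = ∑ i, b i (X i)}.Finite := by
  apply (Set.finite_range (fun X : Fin n → Finset (Fin m) => ∑ i, b i (X i))).subset
  rintro t ⟨X, _, _, rfl⟩
  exact ⟨X, rfl⟩

lemma W_le (b : Fin n → Finset (Fin m) → ℝ) (S : Finset (Fin m))
    (X : Fin n → Finset (Fin m))
    (hd : ∀ i j : Fin n, i ≠ j → Disjoint (X i) (X j)) (hsub : ∀ i, X i ⊆ S) :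
    ∑ i, b i (X i) ≤ W b S :=
  le_csSup (W_set_finite b S).bddAbove ⟨X, hd, hsub, rfl⟩

lemma W_attained (b : Fin n → Finset (Fin m) → ℝ) (S : Finset (Fin m)) :
    ∃ X : Fin n → Finset (Fin m),
      (∀ i j : Fin n, i ≠ j → Disjoint (X i) (X j)) ∧ (∀ i, X i ⊆ S) ∧
      W b S = ∑ i, b i (X i) := by
  have hne : {t : ℝ | ∃ X : Fin n → Finset (Fin m),
      (∀ i j : Fin n, i ≠ j → Disjoint (X i) (X j)) ∧ (∀ i, X i ⊆ S) ∧
      t = ∑ i, b i (X i)}.Nonempty := by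
    refine ⟨∑ i, b i ((fun _ => (∅ : Finset (Fin m))) i),
      ⟨fun _ => ∅, fun i j _ => disjoint_empty_left _, fun i => empty_subset _, rfl⟩⟩
  obtain ⟨X, h1, h2, h3⟩ := hne.csSup_mem (W_set_finite b S)
  exact ⟨X, h1, h2, h3⟩

lemma Wmult_one_eq_W (b : Fin n → Finset (Fin m) → ℝ) :
    Wmult b (fun _ => 1) = W b Finset.univ := by
  unfold Wmult W
  congr 1
  ext t
  constructor
  · rintro ⟨X, hX, rfl⟩
    refine ⟨X, fun i j hij => ?_, fun i => subset_univ _, rfl⟩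
    rw [Finset.disjoint_left]
    intro a haX haj
    exact hij (Finset.card_le_one.1 (hX a) i (by simp [haX]) j (by simp [haj]))
  · rintro ⟨X, hd, _, rfl⟩
    refine ⟨X, fun j => Finset.card_le_one.2 ?_, rfl⟩
    intro i hi k hk
    simp only [mem_filter, mem_univ, true_and] at hi hk
    by_contra hik
    exact (Finset.disjoint_left.1 (hd i k hik)) hi hk

end EngProof
namespace EngProof

variable {m : ℕ} {v : Finset (Fin m) → ℝ}

lemma gs_local_submodular (hv : IsGS v) {S : Finset (Fin m)} {x y : Fin m}
    (hx : x ∉ S) (hy : y ∉ S) (hxy : x ≠ y) :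
    v (insert x (insert y S)) + v S ≤ v (insert x S) + v (insert y S) := by
  obtain ⟨⟨h0, hmono, hnn⟩, hgs⟩ := hv
  by_contra hcon
  push_neg at hcon
  set s0 := v S with hs0
  set A := v (insert x S) with hA
  set Y := v (insert y S) with hY
  set XY := v (insert x (insert y S)) with hXY
  have hxS : x ∉ insert y S := by simp [hx, hxy]
  have hmA : s0 ≤ A := hmono _ _ (Finset.subset_insert _ _)
  have hmY : s0 ≤ Y := hmono _ _ (Finset.subset_insert _ _)
  have hmXY : Y ≤ XY := hmono _ _ (Finset.subset_insert _ _)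
  have hmXY' : A ≤ XY := hmono _ _ (Finset.insert_subset_insert _ (Finset.subset_insert _ _))
  have huniv : ∀ T, v T ≤ v Finset.univ := fun T => hmono _ _ (Finset.subset_univ _)
  have hnn' : 0 ≤ v Finset.univ := hnn _
  set B : ℝ := v Finset.univ + 1 with hB
  set px : ℝ := (A - s0) + (XY - A - Y + s0) / 2 with hpx
  set py : ℝ := (XY - A + Y - s0) / 2 with hpy
  set p : Fin m → ℝ := fun j => if j = x then px else if j = y then py else if j ∈ S then 0 else B with hp
  set q : Fin m → ℝ := fun j => if j = y then B else p j with hq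
  have hpx0 : 0 ≤ px := by simp only [hpx]; linarith
  have hpy0 : 0 ≤ py := by simp only [hpy]; linarith
  have hpyB : py < B := by
    simp only [hpy, hB]
    have := huniv (insert x (insert y S))
    have := hnn (insert x S)
    have := hnn S
    have := huniv (insert y S)
    linarith
  have hp0 : ∀ j, 0 ≤ p j := by
    intro j
    simp only [hp]
    split_ifs with h1 h2 h3
    · exact hpx0
    · exact hpy0
    · exact le_rfl
    · linarith
  have hq0 : ∀ j, 0 ≤ q j := by
    intro j
    simp only [hq]
    split_ifs with h1
    · linarith
    · exact hp0 j
  have hpS : ∀ j ∈ S, p j = 0 := by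
    intro j hj
    have hjx : j ≠ x := fun h => hx (h ▸ hj)
    have hjy : j ≠ y := fun h => hy (h ▸ hj)
    simp [hp, hjx, hjy, hj]
  have hqS : ∀ j ∈ S, q j = 0 := by
    intro j hj
    have hjy : j ≠ y := fun h => hy (h ▸ hj)
    simp only [hq, if_neg hjy]
    exact hpS j hj
  have hsumS : ∑ j ∈ S, p j = 0 := Finset.sum_eq_zero hpS
  have hsumSq : ∑ j ∈ S, q j = 0 := Finset.sum_eq_zero hqS
  have hpxval : p x = px := by simp [hp]
  have hpyval : p y = py := by simp [hp, hxy.symm]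
  -- utility of Sxy at p is s0
  have husxy : v (insert x (insert y S)) - ∑ j ∈ insert x (insert y S), p j = s0 := by
    rw [Finset.sum_insert hxS, Finset.sum_insert hy, hsumS, hpxval, hpyval]
    simp only [hpx, hpy]
    ring_nf
    rw [hXY]; ring
  -- Sxy is demanded at p
  have hdem : InDemand v p (insert x (insert y S)) := by
    intro T
    rw [husxy]
    by_cases hTsub : T ⊆ insert x (insert y S)
    · by_cases hxT : x ∈ T <;> by_cases hyT : y ∈ T
      · have h1 : v T ≤ XY := hmono _ _ hTsub
        have h2 : px + py ≤ ∑ j ∈ T, p j := by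
          have : ∑ j ∈ ({x, y} : Finset (Fin m)), p j ≤ ∑ j ∈ T, p j := by
            apply Finset.sum_le_sum_of_subset_of_nonneg
            · intro j hj
              simp only [Finset.mem_insert, Finset.mem_singleton] at hj
              rcases hj with rfl | rfl
              exacts [hxT, hyT]
            · intro j _ _; exact hp0 j
          rwa [Finset.sum_pair hxy, hpxval, hpyval] at this
        simp only [hpx, hpy] at h2 ⊢
        linarith
      · have hTsub' : T ⊆ insert x S := by
          intro j hj
          have := hTsub hj
          simp only [Finset.mem_insert] at this ⊢
          rcases this with h | h | h
          · exact Or.inl h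
          · exact absurd (h ▸ hj) hyT
          · exact Or.inr h
        have h1 : v T ≤ A := hmono _ _ hTsub'
        have h2 : px ≤ ∑ j ∈ T, p j := by
          have := Finset.single_le_sum (fun j (_ : j ∈ T) => hp0 j) hxT
          rwa [hpxval] at this
        simp only [hpx] at h2 ⊢
        linarith
      · have hTsub' : T ⊆ insert y S := by
          intro j hj
          have := hTsub hj
          simp only [Finset.mem_insert] at this ⊢
          rcases this with h | h
          · exact absurd (h ▸ hj) hxT
          · exact h
        have h1 : v T ≤ Y := hmono _ _ hTsub'
        have h2 : py ≤ ∑ j ∈ T, p j := by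
          have := Finset.single_le_sum (fun j (_ : j ∈ T) => hp0 j) hyT
          rwa [hpyval] at this
        simp only [hpy] at h2 ⊢
        linarith
      · have hTsub' : T ⊆ S := by
          intro j hj
          have := hTsub hj
          simp only [Finset.mem_insert] at this
          rcases this with h | h | h
          · exact absurd (h ▸ hj) hxT
          · exact absurd (h ▸ hj) hyT
          · exact h
        have h1 : v T ≤ s0 := hmono _ _ hTsub'
        have h2 : 0 ≤ ∑ j ∈ T, p j := Finset.sum_nonneg (fun j _ => hp0 j)
        linarith
    · obtain ⟨z, hzT, hz⟩ := Finset.not_subset.1 hTsub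
      have hzp : p z = B := by
        simp only [Finset.mem_insert, not_or] at hz
        obtain ⟨hz1, hz2, hz3⟩ := hz
        simp [hp, hz1, hz2, hz3]
      have h2 : B ≤ ∑ j ∈ T, p j := by
        have := Finset.single_le_sum (fun j (_ : j ∈ T) => hp0 j) hzT
        rwa [hzp] at this
      have h1 : v T ≤ v Finset.univ := huniv T
      have : 0 ≤ s0 := hnn S
      simp only [hB] at h2
      linarith
  -- apply GS with q
  have hpq : ∀ j, p j ≤ q j := by
    intro j
    simp only [hq]
    split_ifs with h1
    · rw [h1, hpyval]; linarith
    · exact le_rfl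
  obtain ⟨T, hTdem, hTkeep⟩ := hgs p q hpq _ hdem
  have hST : S ⊆ T := by
    intro j hj
    apply hTkeep j (by simp [Finset.mem_insert, hj])
    have hjy : j ≠ y := fun h => hy (h ▸ hj)
    simp [hq, hjy]
  have hxT : x ∈ T := by
    apply hTkeep x (by simp)
    simp [hq, hxy]
  -- contradiction from demand of T at q, compared with S
  have hcmp := hTdem S
  rw [hsumSq] at hcmp
  by_cases hTsub : T ⊆ insert x S
  · have hTeq : T = insert x S := by
      apply Finset.Subset.antisymm hTsub
      intro j hj
      simp only [Finset.mem_insert] at hj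
      rcases hj with rfl | hj
      · exact hxT
      · exact hST hj
    have hsumTq : ∑ j ∈ T, q j = px := by
      rw [hTeq, Finset.sum_insert hx, hsumSq]
      have : q x = px := by simp [hq, hxy, hpxval]
      rw [this, add_zero]
    rw [hTeq] at hcmp
    rw [hTeq] at hsumTq
    rw [hsumTq] at hcmp
    simp only [← hA] at hcmp
    simp only [hpx] at hcmp
    linarith
  · obtain ⟨z, hzT, hz⟩ := Finset.not_subset.1 hTsub
    have hzq : q z = B := by
      simp only [Finset.mem_insert, not_or] at hz
      obtain ⟨hz1, hz3⟩ := hz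
      by_cases hzy : z = y
      · simp [hq, hzy]
      · have hzS : z ∉ S := fun h => hz3 h
        simp [hq, hzy, hp, hz1, hzS]
    have h2 : B ≤ ∑ j ∈ T, q j := by
      have := Finset.single_le_sum (fun j (_ : j ∈ T) => hq0 j) hzT
      rwa [hzq] at this
    have h1 : v T ≤ v Finset.univ := huniv T
    have : 0 ≤ s0 := hnn S
    simp only [hB] at h2
    linarith

lemma gs_submodular (hv : IsGS v) :
    ∀ (B A : Finset (Fin m)) (j : Fin m), A ⊆ B → j ∉ B →
      v (insert j B) - v B ≤ v (insert j A) - v A := by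
  intro B
  induction B using Finset.strongInduction with
  | _ B ih =>
    intro A j hAB hjB
    by_cases hABeq : A = B
    · subst hABeq; exact le_rfl
    · have hss : A ⊂ B := Finset.ssubset_iff_subset_ne.2 ⟨hAB, hABeq⟩
      obtain ⟨x, hxB, hxA⟩ := Finset.exists_of_ssubset hss
      set B' := B.erase x with hB'
      have hxB' : x ∉ B' := Finset.notMem_erase _ _
      have hjB' : j ∉ B' := fun h => hjB (Finset.erase_subset _ _ h)
      have hjx : j ≠ x := fun h => hjB (h ▸ hxB)
      have hins : insert x B' = B := Finset.insert_erase hxB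
      have h1 : v (insert j B) - v B ≤ v (insert j B') - v B' := by
        have := gs_local_submodular hv (S := B') (x := j) (y := x) hjB' hxB' hjx
        rw [hins] at this
        linarith
      have h2 := ih B' (Finset.erase_ssubset hxB) A j
        (Finset.subset_erase.2 ⟨hAB, hxA⟩) hjB'
      linarith

lemma gs_sum_marginals (hv : IsGS v) (C : Finset (Fin m)) :
    ∀ (D : Finset (Fin m)), Disjoint C D →
      v (C ∪ D) - v C ≤ ∑ j ∈ D, (v (insert j C) - v C) := by
  intro D
  induction D using Finset.induction with
  | empty => simp
  | @insert j D' hjD ih =>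
    intro hdisj
    have hjC : j ∉ C := fun h =>
      (Finset.disjoint_left.1 hdisj) h (Finset.mem_insert_self _ _)
    have hdisj' : Disjoint C D' :=
      hdisj.mono_right (Finset.subset_insert _ _)
    have hjCD : j ∉ C ∪ D' := by
      simp [hjC, hjD]
    have hsub : v (insert j (C ∪ D')) - v (C ∪ D') ≤ v (insert j C) - v C :=
      gs_submodular hv (C ∪ D') C j Finset.subset_union_left hjCD
    have hunion : C ∪ insert j D' = insert j (C ∪ D') := Finset.union_insert j C D'
    rw [hunion, Finset.sum_insert hjD]
    have := ih hdisj'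
    linarith

end EngProof
namespace EngProof

variable {m : ℕ} {v : Finset (Fin m) → ℝ}

lemma sum_le_sum_of_subset_of_nonpos {s t : Finset (Fin m)} {f : Fin m → ℝ}
    (h : s ⊆ t) (hf : ∀ i ∈ t, i ∉ s → f i ≤ 0) :
    ∑ i ∈ t, f i ≤ ∑ i ∈ s, f i := by
  have := Finset.sum_le_sum_of_subset_of_nonneg (f := fun i => -f i) h
    (fun i hi his => by simpa using hf i hi his)
  simpa using this

lemma truncation_isGS (hv : IsGS v) (X : Finset (Fin m)) :
    IsGS (fun S => v (S ∩ X)) := by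
  obtain ⟨⟨h0, hmono, hnn⟩, hgs⟩ := hv
  constructor
  · refine ⟨by simp [h0], fun S T hST => ?_, fun S => hnn _⟩
    exact hmono _ _ (Finset.inter_subset_inter hST (Finset.Subset.refl X))
  intro p q hpq S hS
  set C : ℝ := v Finset.univ + 1 with hC
  have hCpos : 0 < C := by
    have := hnn Finset.univ
    simp only [hC]; linarith
  set pt : Fin m → ℝ := fun j => if j ∈ X then p j else C with hpt
  set qt : Fin m → ℝ := fun j => if j ∈ X then q j else C with hqt
  -- items of S outside X have nonpositive price
  have f1 : ∀ j ∈ S, j ∉ X → p j ≤ 0 := by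
    intro j hjS hjX
    have hd := hS (S.erase j)
    simp only at hd
    have heq : (S.erase j) ∩ X = S ∩ X := by
      ext a
      simp only [Finset.mem_inter, Finset.mem_erase]
      constructor
      · rintro ⟨⟨_, ha⟩, haX⟩; exact ⟨ha, haX⟩
      · rintro ⟨haS, haX⟩
        exact ⟨⟨fun h => hjX (h ▸ haX), haS⟩, haX⟩
    rw [heq, Finset.sum_erase_eq_sub hjS] at hd
    linarith
  -- S ∩ X is demanded by v at pt
  have f2 : InDemand v pt (S ∩ X) := by
    intro T
    have hsplitT : ∑ j ∈ T ∩ X, pt j + ∑ j ∈ T \ X, pt j = ∑ j ∈ T, pt j :=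
      Finset.sum_inter_add_sum_sdiff T X pt
    have hTX : ∑ j ∈ T ∩ X, pt j = ∑ j ∈ T ∩ X, p j := by
      apply Finset.sum_congr rfl
      intro j hj
      simp only [hpt, if_pos (Finset.mem_inter.1 hj).2]
    have hTd : ∑ j ∈ T \ X, pt j = (T \ X).card * C := by
      rw [Finset.sum_congr rfl (fun j hj => ?_), Finset.sum_const, nsmul_eq_mul]
      simp only [hpt, if_neg (Finset.mem_sdiff.1 hj).2]
    have hcard : v T - v (T ∩ X) ≤ (T \ X).card * C := by
      rcases Nat.eq_zero_or_pos (T \ X).card with hzero | hposc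
      · have : T \ X = ∅ := Finset.card_eq_zero.1 hzero
        have hTsub : T ⊆ X := by
          intro a ha
          by_contra haX
          exact absurd (Finset.mem_sdiff.2 ⟨ha, haX⟩) (by simp [this])
        have : T ∩ X = T := Finset.inter_eq_left.2 hTsub
        rw [this, hzero]
        simp
      · have h1 : (1 : ℝ) ≤ (T \ X).card := by exact_mod_cast hposc
        have h2 : v T ≤ v Finset.univ := hmono _ _ (Finset.subset_univ _)
        have h3 : 0 ≤ v (T ∩ X) := hnn _
        nlinarith
    have hSX : ∑ j ∈ S ∩ X, pt j = ∑ j ∈ S ∩ X, p j := by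
      apply Finset.sum_congr rfl
      intro j hj
      simp only [hpt, if_pos (Finset.mem_inter.1 hj).2]
    -- use demand of S for truncation at p, on the set (T ∩ X) ∪ (S \ X)
    have hd := hS ((T ∩ X) ∪ (S \ X))
    simp only at hd
    have hdisjTX : Disjoint (T ∩ X) (S \ X) := by
      rw [Finset.disjoint_left]
      intro a ha ha'
      exact (Finset.mem_sdiff.1 ha').2 (Finset.mem_inter.1 ha).2
    have hTXX : ((T ∩ X) ∪ (S \ X)) ∩ X = T ∩ X := by
      ext a
      simp only [Finset.mem_inter, Finset.mem_union, Finset.mem_sdiff]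
      constructor
      · rintro ⟨⟨h1, h2⟩ | ⟨h1, h2⟩, h3⟩
        · exact ⟨h1, h3⟩
        · exact absurd h3 h2
      · rintro ⟨h1, h2⟩
        exact ⟨Or.inl ⟨h1, h2⟩, h2⟩
    rw [hTXX, Finset.sum_union hdisjTX] at hd
    -- split price of S
    have hsplitS : ∑ j ∈ S ∩ X, p j + ∑ j ∈ S \ X, p j = ∑ j ∈ S, p j :=
      Finset.sum_inter_add_sum_sdiff S X p
    rw [hSX]
    calc v T - ∑ j ∈ T, pt j
        = v T - ∑ j ∈ T ∩ X, p j - (T \ X).card * C := by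
          rw [← hsplitT, hTX, hTd]; ring
      _ ≤ v (T ∩ X) - ∑ j ∈ T ∩ X, p j := by linarith
      _ ≤ v (S ∩ X) - ∑ j ∈ S ∩ X, p j := by linarith
  -- apply GS for v
  have hptqt : ∀ j, pt j ≤ qt j := by
    intro j
    simp only [hpt, hqt]
    split_ifs with h
    · exact hpq j
    · exact le_rfl
  obtain ⟨B, hBdem, hBkeep⟩ := hgs pt qt hptqt _ f2
  -- B is contained in X
  have f4 : B ⊆ X := by
    intro j hjB
    by_contra hjX
    have := hBdem (B.erase j)
    rw [Finset.sum_erase_eq_sub hjB] at this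
    have hqtj : qt j = C := by simp [hqt, hjX]
    have h2 : v B ≤ v Finset.univ := hmono _ _ (Finset.subset_univ _)
    have h3 : 0 ≤ v (B.erase j) := hnn _
    rw [hqtj] at this
    simp only [hC] at this
    linarith
  set Nq : Finset (Fin m) := Finset.univ.filter (fun j => j ∉ X ∧ q j ≤ 0) with hNq
  have hdisjBN : Disjoint B Nq := by
    rw [Finset.disjoint_left]
    intro a haB haN
    have := (Finset.mem_filter.1 haN).2.1
    exact this (f4 haB)
  have hBNX : (B ∪ Nq) ∩ X = B := by
    ext a
    simp only [Finset.mem_inter, Finset.mem_union, hNq, Finset.mem_filter, Finset.mem_univ,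
      true_and]
    constructor
    · rintro ⟨h1 | h1, h2⟩
      · exact h1
      · exact absurd h2 h1.1
    · intro h
      exact ⟨Or.inl h, f4 h⟩
  have hsumBq : ∑ j ∈ B, qt j = ∑ j ∈ B, q j :=
    Finset.sum_congr rfl (fun j hj => by simp only [hqt, if_pos (f4 hj)])
  refine ⟨B ∪ Nq, ?_, ?_⟩
  · -- B ∪ Nq demanded by truncation at q
    intro T'
    simp only
    rw [hBNX]
    have hsum : ∑ j ∈ B ∪ Nq, q j = ∑ j ∈ B, q j + ∑ j ∈ Nq, q j :=
      Finset.sum_union hdisjBN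
    -- demand of B at qt applied to T' ∩ X
    have hd := hBdem (T' ∩ X)
    have hT'X : ∑ j ∈ T' ∩ X, qt j = ∑ j ∈ T' ∩ X, q j :=
      Finset.sum_congr rfl (fun j hj => by simp only [hqt, if_pos (Finset.mem_inter.1 hj).2])
    rw [hT'X, hsumBq] at hd
    -- price of T' splits
    have hsplit : ∑ j ∈ T' ∩ X, q j + ∑ j ∈ T' \ X, q j = ∑ j ∈ T', q j :=
      Finset.sum_inter_add_sum_sdiff T' X q
    -- T' \ X costs at least the (nonpositive) total of Nq
    have hbound : ∑ j ∈ Nq, q j ≤ ∑ j ∈ T' \ X, q j := by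
      set F : Finset (Fin m) := (T' \ X).filter (fun j => q j ≤ 0) with hF
      have h1 : ∑ j ∈ F, q j ≤ ∑ j ∈ T' \ X, q j := by
        apply Finset.sum_le_sum_of_subset_of_nonneg (Finset.filter_subset _ _)
        intro i hi hiF
        by_contra hlt
        push_neg at hlt
        exact hiF (Finset.mem_filter.2 ⟨hi, le_of_lt hlt⟩)
      have h2 : ∑ j ∈ Nq, q j ≤ ∑ j ∈ F, q j := by
        apply sum_le_sum_of_subset_of_nonpos
        · intro a haF
          obtain ⟨ha1, ha2⟩ := Finset.mem_filter.1 haF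
          obtain ⟨_, haX⟩ := Finset.mem_sdiff.1 ha1
          exact Finset.mem_filter.2 ⟨Finset.mem_univ _, haX, ha2⟩
        · intro i hi _
          exact (Finset.mem_filter.1 hi).2.2
      linarith
    rw [hsum]
    linarith
  · -- items of S with unchanged price stay
    intro j hjS hpqj
    by_cases hjX : j ∈ X
    · apply Finset.mem_union_left
      apply hBkeep j (Finset.mem_inter.2 ⟨hjS, hjX⟩)
      simp only [hpt, hqt, if_pos hjX]
      exact hpqj
    · apply Finset.mem_union_right
      rw [hNq]
      refine Finset.mem_filter.2 ⟨Finset.mem_univ _, hjX, ?_⟩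
      rw [← hpqj]
      exact f1 j hjS hjX

end EngProof
namespace EngProof

variable {n m : ℕ}

lemma exists_inDemand (v : Finset (Fin m) → ℝ) (P : Fin m → ℝ) :
    ∃ S, InDemand v P S := by
  obtain ⟨S, -, hS⟩ := Finset.exists_max_image (Finset.univ : Finset (Finset (Fin m)))
    (fun S => v S - ∑ j ∈ S, P j) ⟨∅, Finset.mem_univ _⟩
  exact ⟨S, fun T => hS T (Finset.mem_univ _)⟩

lemma demand_price_le {v : Finset (Fin m) → ℝ} (hval : IsValuation v)
    {P : Fin m → ℝ} {S : Finset (Fin m)} {j : Fin m}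
    (hdem : InDemand v P S) (hj : j ∈ S) : P j ≤ v Finset.univ := by
  have h := hdem (S.erase j)
  rw [Finset.sum_erase_eq_sub hj] at h
  have h1 : 0 ≤ v (S.erase j) := hval.2.2 _
  have h2 : v S ≤ v Finset.univ := hval.2.1 _ _ (Finset.subset_univ _)
  linarith

/-- Bundle held by agent `a` under ownership map `o`. -/
def bundleOf (o : Fin m → Option (Fin n)) (a : Fin n) : Finset (Fin m) :=
  Finset.univ.filter (fun j => o j = some a)

/-- Personalized prices of agent `a` in auction state `σ`. -/
def persOf (δ : ℝ) (σ : (Fin m → ℝ) × (Fin m → Option (Fin n))) (a : Fin n) :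
    Fin m → ℝ :=
  fun j => σ.1 j + (if σ.2 j = some a then 0 else δ)

/-- Auction invariant. -/
def AInv (c : Fin n → Finset (Fin m) → ℝ) (δ : ℝ)
    (σ : (Fin m → ℝ) × (Fin m → Option (Fin n))) : Prop :=
  (∀ j, 0 ≤ σ.1 j) ∧ (∀ j, σ.2 j = none → σ.1 j = 0) ∧
  (∀ j, σ.1 j ≤ ∑ a, c a Finset.univ) ∧
  (∀ a, ∃ S, InDemand (c a) (persOf δ σ a) S ∧ bundleOf σ.2 a ⊆ S)

/-- All agents are satisfied with their current bundle. -/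
def ASat (c : Fin n → Finset (Fin m) → ℝ) (δ : ℝ)
    (σ : (Fin m → ℝ) × (Fin m → Option (Fin n))) : Prop :=
  ∀ a, InDemand (c a) (persOf δ σ a) (bundleOf σ.2 a)

lemma auction_step (c : Fin n → Finset (Fin m) → ℝ) (hGS : ∀ a, IsGS (c a))
    {δ : ℝ} (hδ : 0 < δ) (σ : (Fin m → ℝ) × (Fin m → Option (Fin n)))
    (hInv : AInv c δ σ) (hns : ¬ ASat c δ σ) :
    ∃ σ', AInv c δ σ' ∧ ∑ j, σ.1 j + δ ≤ ∑ j, σ'.1 j := by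
  classical
  obtain ⟨hp0, hnone, hpVB, hdem⟩ := hInv
  simp only [ASat, not_forall] at hns
  obtain ⟨a, ha⟩ := hns
  obtain ⟨S, hSdem, hsub⟩ := hdem a
  have hSne : S ≠ bundleOf σ.2 a := fun h => ha (h ▸ hSdem)
  set G : Finset (Fin m) := S.filter (fun j => σ.2 j ≠ some a) with hG
  have hGne : G.Nonempty := by
    have hss : bundleOf σ.2 a ⊂ S := hsub.ssubset_of_ne (Ne.symm hSne)
    obtain ⟨j, hjS, hjb⟩ := Finset.exists_of_ssubset hss
    refine ⟨j, Finset.mem_filter.2 ⟨hjS, ?_⟩⟩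
    intro hj
    exact hjb (Finset.mem_filter.2 ⟨Finset.mem_univ _, hj⟩)
  have hGS' : ∀ j ∈ G, j ∈ S ∧ σ.2 j ≠ some a := fun j hj =>
    ⟨(Finset.mem_filter.1 hj).1, (Finset.mem_filter.1 hj).2⟩
  set p' : Fin m → ℝ := fun j => σ.1 j + (if j ∈ G then δ else 0) with hp'
  set o' : Fin m → Option (Fin n) := fun j => if j ∈ S then some a else σ.2 j with ho'
  -- new bundle of a is S
  have hbund_a : bundleOf o' a = S := by
    ext j
    simp only [bundleOf, Finset.mem_filter, Finset.mem_univ, true_and, ho']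
    constructor
    · intro h
      by_contra hjS
      rw [if_neg hjS] at h
      exact hjS (hsub (Finset.mem_filter.2 ⟨Finset.mem_univ _, h⟩))
    · intro h
      rw [if_pos h]
  -- new bundles of others
  have hbund_b : ∀ b, b ≠ a → bundleOf o' b = (bundleOf σ.2 b) \ S := by
    intro b hb
    ext j
    simp only [bundleOf, Finset.mem_filter, Finset.mem_univ, true_and, ho',
      Finset.mem_sdiff]
    by_cases hjS : j ∈ S
    · simp only [if_pos hjS]
      constructor
      · intro h
        exact absurd (Option.some.inj h).symm hb
      · rintro ⟨-, h⟩
        exact absurd hjS h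
    · simp only [if_neg hjS]
      tauto
  -- personalized prices of a unchanged
  have hpers_a : persOf δ (p', o') a = persOf δ σ a := by
    funext j
    simp only [persOf, hp', ho']
    by_cases hjG : j ∈ G
    · obtain ⟨hjS, hja⟩ := hGS' j hjG
      rw [if_pos hjG, if_pos hjS, if_neg hja]
      simp
    · by_cases hjS : j ∈ S
      · have hja : σ.2 j = some a := by
          by_contra hcon
          exact hjG (Finset.mem_filter.2 ⟨hjS, hcon⟩)
        rw [if_neg hjG, if_pos hjS, if_pos hja]
        simp
      · rw [if_neg hjG, if_neg hjS]
        ring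
  -- personalized prices of others increase, unchanged outside S
  have hpers_b_le : ∀ b, b ≠ a → ∀ j, persOf δ σ b j ≤ persOf δ (p', o') b j := by
    intro b hb j
    simp only [persOf, hp', ho']
    by_cases hjG : j ∈ G
    · obtain ⟨hjS, _⟩ := hGS' j hjG
      rw [if_pos hjG, if_pos hjS, if_neg (fun h => hb (Option.some.inj h).symm)]
      split_ifs <;> linarith
    · by_cases hjS : j ∈ S
      · rw [if_neg hjG, if_pos hjS, if_neg (fun h => hb (Option.some.inj h).symm)]
        have hja : σ.2 j = some a := by
          by_contra hcon
          exact hjG (Finset.mem_filter.2 ⟨hjS, hcon⟩)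
        rw [if_neg (by rw [hja]; exact fun h => hb (Option.some.inj h).symm)]
        simp
      · rw [if_neg hjG, if_neg hjS]
        simp
  have hpers_b_eq : ∀ b, ∀ j, j ∉ S → persOf δ σ b j = persOf δ (p', o') b j := by
    intro b j hjS
    have hjG : j ∉ G := fun h => hjS (hGS' j h).1
    simp only [persOf, hp', ho', if_neg hjG, if_neg hjS]
    ring
  refine ⟨(p', o'), ⟨?_, ?_, ?_, ?_⟩, ?_⟩
  · intro j
    simp only [hp']
    split_ifs <;> [linarith [hp0 j]; linarith [hp0 j]]
  · intro j hj
    simp only [ho'] at hj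
    by_cases hjS : j ∈ S
    · rw [if_pos hjS] at hj; exact absurd hj (by simp)
    · rw [if_neg hjS] at hj
      have hjG : j ∉ G := fun h => hjS (hGS' j h).1
      simp only [hp', if_neg hjG, add_zero]
      exact hnone j hj
  · intro j
    simp only [hp']
    by_cases hjG : j ∈ G
    · rw [if_pos hjG]
      obtain ⟨hjS, hja⟩ := hGS' j hjG
      have hple : persOf δ σ a j ≤ c a Finset.univ :=
        demand_price_le (hGS a).1 hSdem hjS
      simp only [persOf, if_neg hja] at hple
      have hsum : c a Finset.univ ≤ ∑ b, c b Finset.univ :=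
        Finset.single_le_sum (fun b _ => (hGS b).1.2.2 Finset.univ) (Finset.mem_univ a)
      linarith
    · rw [if_neg hjG, add_zero]
      exact hpVB j
  · intro b
    by_cases hb : b = a
    · subst hb
      exact ⟨S, by rw [hpers_a]; exact hSdem, by rw [hbund_a]⟩
    · obtain ⟨Sb, hSbdem, hSbsub⟩ := hdem b
      obtain ⟨T', hT'dem, hkeep⟩ := (hGS b).2 (persOf δ σ b) (persOf δ (p', o') b)
        (hpers_b_le b hb) Sb hSbdem
      refine ⟨T', hT'dem, ?_⟩
      intro j hj
      rw [hbund_b b hb] at hj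
      obtain ⟨hjb, hjS⟩ := Finset.mem_sdiff.1 hj
      exact hkeep j (hSbsub hjb) (hpers_b_eq b j hjS)
  · -- price sum increases by at least δ
    have : ∑ j, p' j = ∑ j, σ.1 j + (G.card : ℝ) * δ := by
      simp only [hp']
      rw [Finset.sum_add_distrib]
      congr 1
      rw [Finset.sum_ite_mem, Finset.univ_inter, Finset.sum_const, nsmul_eq_mul]
    rw [this]
    have hcard : (1 : ℝ) ≤ G.card := by
      exact_mod_cast Finset.card_pos.2 hGne
    nlinarith

lemma auction_iterate (c : Fin n → Finset (Fin m) → ℝ) (hGS : ∀ a, IsGS (c a))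
    {δ : ℝ} (hδ : 0 < δ) (k : ℕ) :
    ∃ σ, AInv c δ σ ∧ (ASat c δ σ ∨ (k : ℝ) * δ ≤ ∑ j, σ.1 j) := by
  classical
  induction k with
  | zero =>
    refine ⟨(fun _ => 0, fun _ => none), ⟨?_, ?_, ?_, ?_⟩, Or.inr (by simp)⟩
    · intro j; exact le_rfl
    · intro j _; rfl
    · intro j
      exact Finset.sum_nonneg (fun a _ => (hGS a).1.2.2 Finset.univ)
    · intro a
      obtain ⟨S, hS⟩ := exists_inDemand (c a) (persOf δ (fun _ => 0, fun _ => none) a)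
      refine ⟨S, hS, ?_⟩
      intro j hj
      simp [bundleOf] at hj
  | succ k ih =>
    obtain ⟨σ, hInv, hor⟩ := ih
    by_cases hsat : ASat c δ σ
    · exact ⟨σ, hInv, Or.inl hsat⟩
    · rcases hor with hsat' | hsum
      · exact absurd hsat' hsat
      · obtain ⟨σ', hInv', hsum'⟩ := auction_step c hGS hδ σ hInv hsat
        refine ⟨σ', hInv', Or.inr ?_⟩
        push_cast
        linarith

lemma exists_allSat (c : Fin n → Finset (Fin m) → ℝ) (hGS : ∀ a, IsGS (c a))
    {δ : ℝ} (hδ : 0 < δ) :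
    ∃ σ, AInv c δ σ ∧ ASat c δ σ := by
  obtain ⟨k, hk⟩ := exists_nat_gt ((m : ℝ) * (∑ a, c a Finset.univ) / δ)
  obtain ⟨σ, hInv, hor⟩ := auction_iterate c hGS hδ k
  rcases hor with hsat | hsum
  · exact ⟨σ, hInv, hsat⟩
  · exfalso
    have hbound : ∑ j, σ.1 j ≤ (m : ℝ) * (∑ a, c a Finset.univ) := by
      calc ∑ j, σ.1 j ≤ ∑ _j : Fin m, (∑ a, c a Finset.univ) :=
            Finset.sum_le_sum (fun j _ => hInv.2.2.1 j)
        _ = (m : ℝ) * (∑ a, c a Finset.univ) := by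
            rw [Finset.sum_const, nsmul_eq_mul, Finset.card_univ, Fintype.card_fin]
    have hklt : (m : ℝ) * (∑ a, c a Finset.univ) < (k : ℝ) * δ := by
      rw [div_lt_iff₀ hδ] at hk
      linarith
    linarith

end EngProof
namespace EngProof

variable {n m : ℕ}

lemma exists_approxWE (c : Fin n → Finset (Fin m) → ℝ) (hGS : ∀ a, IsGS (c a))
    {δ : ℝ} (hδ : 0 < δ) :
    ∃ (p : Fin m → ℝ) (A : Fin n → Finset (Fin m)),
      (∀ j, 0 ≤ p j ∧ p j ≤ ∑ a, c a Finset.univ) ∧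
      (∀ a b, a ≠ b → Disjoint (A a) (A b)) ∧
      (∀ j, 0 < p j → ∃ a, j ∈ A a) ∧
      (∀ a T, c a T - ∑ j ∈ T, p j ≤ c a (A a) - ∑ j ∈ A a, p j + δ * m) := by
  obtain ⟨σ, hInv, hSat⟩ := exists_allSat c hGS hδ
  obtain ⟨hp0, hnone, hpVB, -⟩ := hInv
  refine ⟨σ.1, bundleOf σ.2, fun j => ⟨hp0 j, hpVB j⟩, ?_, ?_, ?_⟩
  · intro a b hab
    rw [Finset.disjoint_left]
    intro j hja hjb
    simp only [bundleOf, Finset.mem_filter] at hja hjb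
    rw [hja.2] at hjb
    exact hab (Option.some.inj hjb.2)
  · intro j hj
    cases ho : σ.2 j with
    | none => exact absurd (hnone j ho) (by linarith)
    | some a =>
      exact ⟨a, Finset.mem_filter.2 ⟨Finset.mem_univ _, ho⟩⟩
  · intro a T
    have hd := hSat a T
    have h1 : ∑ j ∈ bundleOf σ.2 a, persOf δ σ a j = ∑ j ∈ bundleOf σ.2 a, σ.1 j := by
      apply Finset.sum_congr rfl
      intro j hj
      have : σ.2 j = some a := (Finset.mem_filter.1 hj).2
      simp [persOf, this]
    have h2 : ∑ j ∈ T, persOf δ σ a j ≤ ∑ j ∈ T, σ.1 j + δ * m := by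
      have hle : ∀ j ∈ T, persOf δ σ a j ≤ σ.1 j + δ := by
        intro j _
        simp only [persOf]
        split_ifs <;> linarith
      calc ∑ j ∈ T, persOf δ σ a j ≤ ∑ j ∈ T, (σ.1 j + δ) := Finset.sum_le_sum hle
        _ = ∑ j ∈ T, σ.1 j + (T.card : ℝ) * δ := by
            rw [Finset.sum_add_distrib, Finset.sum_const, nsmul_eq_mul]
        _ ≤ ∑ j ∈ T, σ.1 j + δ * m := by
            have hTm : T.card ≤ m := le_trans (Finset.card_le_univ T) (le_of_eq (by simp))
            have : (T.card : ℝ) ≤ m := by exact_mod_cast hTm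
            nlinarith
    rw [h1] at hd
    linarith

lemma exists_WE (c : Fin n → Finset (Fin m) → ℝ) (hGS : ∀ a, IsGS (c a)) (hn : 0 < n) :
    ∃ (p : Fin m → ℝ) (A : Fin n → Finset (Fin m)),
      (∀ j, 0 ≤ p j) ∧
      (∀ a b, a ≠ b → Disjoint (A a) (A b)) ∧
      (∀ j, ∃ a, j ∈ A a) ∧
      (∀ a, InDemand (c a) p (A a)) := by
  classical
  set VB := ∑ a, c a Finset.univ with hVB
  have happrox : ∀ t : ℕ, ∃ (p : Fin m → ℝ) (A : Fin n → Finset (Fin m)),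
      (∀ j, 0 ≤ p j ∧ p j ≤ VB) ∧
      (∀ a b, a ≠ b → Disjoint (A a) (A b)) ∧
      (∀ j, 0 < p j → ∃ a, j ∈ A a) ∧
      (∀ a T, c a T - ∑ j ∈ T, p j ≤ c a (A a) - ∑ j ∈ A a, p j + (1/((t:ℝ)+1)) * m) :=
    fun t => exists_approxWE c hGS (δ := 1/((t:ℝ)+1)) (by positivity)
  choose P Al hbnd hdisj hclear hdem using happrox
  -- pigeonhole: one allocation appears infinitely often
  obtain ⟨A, hAinf⟩ := Finite.exists_infinite_fiber Al
  have hset : (Al ⁻¹' {A}).Infinite := Set.infinite_coe_iff.1 hAinf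
  set e := hset.natEmbedding with he
  set u : ℕ → ℕ := fun k => (e k : ℕ) with hu
  have hu_prop : ∀ k, Al (u k) = A := fun k => (e k).2
  have hu_inj : Function.Injective u := fun k l hkl => e.injective (Subtype.ext hkl)
  have hu_tend : Filter.Tendsto u Filter.atTop Filter.atTop := by
    rw [← Nat.cofinite_eq_atTop]
    exact hu_inj.tendsto_cofinite
  -- compactness: extract a convergent subsequence of prices
  have hK : IsCompact (Set.pi Set.univ (fun _ : Fin m => Set.Icc (0:ℝ) VB)) :=
    isCompact_univ_pi (fun _ => isCompact_Icc)
  have hmem : ∀ k, P (u k) ∈ Set.pi Set.univ (fun _ : Fin m => Set.Icc (0:ℝ) VB) := by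
    intro k
    rw [Set.mem_univ_pi]
    exact fun j => ⟨(hbnd _ j).1, (hbnd _ j).2⟩
  obtain ⟨phat, -, φ, hφmono, hφtend⟩ := hK.tendsto_subseq hmem
  set w : ℕ → ℕ := fun k => u (φ k) with hw
  have hw_tend : Filter.Tendsto w Filter.atTop Filter.atTop :=
    hu_tend.comp hφmono.tendsto_atTop
  have hAw : ∀ k, Al (w k) = A := fun k => hu_prop (φ k)
  have hPj : ∀ j, Filter.Tendsto (fun k => P (w k) j) Filter.atTop (nhds (phat j)) := by
    intro j
    exact (tendsto_pi_nhds.1 hφtend) j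
  have hdelta : Filter.Tendsto (fun k => 1/((w k : ℝ)+1)) Filter.atTop (nhds 0) :=
    tendsto_one_div_add_atTop_nhds_zero_nat.comp hw_tend
  have hphat0 : ∀ j, 0 ≤ phat j := by
    intro j
    exact ge_of_tendsto (hPj j) (Filter.Eventually.of_forall (fun k => (hbnd _ j).1))
  have hphat_clear : ∀ j, 0 < phat j → ∃ a, j ∈ A a := by
    intro j hj
    have hev : ∀ᶠ k in Filter.atTop, 0 < P (w k) j :=
      (hPj j).eventually (eventually_gt_nhds hj)
    obtain ⟨k, hk⟩ := hev.exists
    obtain ⟨a, ha⟩ := hclear (w k) j hk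
    rw [hAw k] at ha
    exact ⟨a, ha⟩
  have hphat_dem : ∀ a, InDemand (c a) phat (A a) := by
    intro a T
    have hk : ∀ k, c a T - ∑ j ∈ T, P (w k) j ≤
        c a (A a) - ∑ j ∈ A a, P (w k) j + (1/((w k : ℝ)+1)) * m := by
      intro k
      have := hdem (w k) a T
      rw [hAw k] at this
      exact this
    have hL : Filter.Tendsto (fun k => c a T - ∑ j ∈ T, P (w k) j) Filter.atTop
        (nhds (c a T - ∑ j ∈ T, phat j)) :=
      tendsto_const_nhds.sub (tendsto_finset_sum _ (fun j _ => hPj j))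
    have hR : Filter.Tendsto
        (fun k => c a (A a) - ∑ j ∈ A a, P (w k) j + (1/((w k : ℝ)+1)) * m)
        Filter.atTop (nhds (c a (A a) - ∑ j ∈ A a, phat j + 0 * m)) :=
      (tendsto_const_nhds.sub (tendsto_finset_sum _ (fun j _ => hPj j))).add
        (hdelta.mul_const _)
    rw [zero_mul, add_zero] at hR
    exact le_of_tendsto_of_tendsto' hL hR hk
  -- dump unallocated (zero-priced) items on agent a0
  set a0 : Fin n := ⟨0, hn⟩ with ha0
  set U : Finset (Fin m) := Finset.univ.filter (fun j => ∀ b, j ∉ A b) with hU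
  have hUzero : ∀ j ∈ U, phat j = 0 := by
    intro j hj
    by_contra hne
    have hpos : 0 < phat j := lt_of_le_of_ne (hphat0 j) (Ne.symm hne)
    obtain ⟨a, ha⟩ := hphat_clear j hpos
    exact (Finset.mem_filter.1 hj).2 a ha
  set A' : Fin n → Finset (Fin m) := fun a => if a = a0 then A a0 ∪ U else A a with hA'
  have hdisjU : ∀ a, Disjoint (A a) U := by
    intro a
    rw [Finset.disjoint_right]
    intro j hj
    exact (Finset.mem_filter.1 hj).2 a
  have hA'eq : ∀ a, a ≠ a0 → A' a = A a := by
    intro a ha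
    simp [hA', ha]
  have hA'eq0 : A' a0 = A a0 ∪ U := by simp [hA']
  have hdA : ∀ x y : Fin n, x ≠ y → Disjoint (A x) (A y) := by
    intro x y hxy
    have := hdisj (w 0) x y hxy
    rwa [hAw 0] at this
  refine ⟨phat, A', hphat0, ?_, ?_, ?_⟩
  · intro a b hab
    by_cases h1 : a = a0 <;> by_cases h2 : b = a0
    · exact absurd (h1.trans h2.symm) hab
    · subst h1
      rw [hA'eq0, hA'eq b h2, Finset.disjoint_union_left]
      exact ⟨hdA _ _ hab, (hdisjU b).symm⟩
    · subst h2
      rw [hA'eq0, hA'eq a h1, Finset.disjoint_union_right]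
      exact ⟨hdA _ _ hab, hdisjU a⟩
    · rw [hA'eq a h1, hA'eq b h2]
      exact hdA _ _ hab
  · intro j
    by_cases hj : ∃ a, j ∈ A a
    · obtain ⟨a, ha⟩ := hj
      by_cases h1 : a = a0
      · subst h1
        exact ⟨a0, by rw [hA'eq0]; exact Finset.mem_union_left _ ha⟩
      · exact ⟨a, by rw [hA'eq a h1]; exact ha⟩
    · push_neg at hj
      refine ⟨a0, ?_⟩
      rw [hA'eq0]
      exact Finset.mem_union_right _ (Finset.mem_filter.2 ⟨Finset.mem_univ _, hj⟩)
  · intro a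
    by_cases h1 : a = a0
    · subst h1
      rw [hA'eq0]
      intro T
      have hd := hphat_dem a0 T
      have hsum : ∑ j ∈ A a0 ∪ U, phat j = ∑ j ∈ A a0, phat j := by
        rw [Finset.sum_union (hdisjU a0)]
        have : ∑ j ∈ U, phat j = 0 := Finset.sum_eq_zero hUzero
        rw [this, add_zero]
      have hmono : c a0 (A a0) ≤ c a0 (A a0 ∪ U) :=
        (hGS a0).1.2.1 _ _ Finset.subset_union_left
      rw [hsum]
      linarith
    · rw [hA'eq a h1]
      exact hphat_dem a

end EngProof
namespace EngProof

variable {n m : ℕ}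

lemma sum_price_swap (Z : Fin n → Finset (Fin m)) (p : Fin m → ℝ) :
    ∑ a, ∑ j ∈ Z a, p j
      = ∑ j, ((Finset.univ.filter (fun a => j ∈ Z a)).card : ℝ) * p j := by
  have h1 : ∀ a, ∑ j ∈ Z a, p j = ∑ j, (if j ∈ Z a then p j else 0) := by
    intro a
    rw [Finset.sum_ite_mem, Finset.univ_inter]
  rw [Finset.sum_congr rfl (fun a _ => h1 a), Finset.sum_comm]
  apply Finset.sum_congr rfl
  intro j _
  rw [← Finset.sum_filter, Finset.sum_const, nsmul_eq_mul]

lemma alloc_price_le (p : Fin m → ℝ) (hp0 : ∀ j, 0 ≤ p j)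
    (Z : Fin n → Finset (Fin m)) (x : Fin m → ℕ)
    (hZ : ∀ j, (Finset.univ.filter (fun a => j ∈ Z a)).card ≤ x j) :
    ∑ a, ∑ j ∈ Z a, p j ≤ ∑ j, (x j : ℝ) * p j := by
  rw [sum_price_swap]
  apply Finset.sum_le_sum
  intro j _
  apply mul_le_mul_of_nonneg_right _ (hp0 j)
  exact_mod_cast hZ j

lemma card_filter_le_one_of_disjoint (Z : Fin n → Finset (Fin m))
    (hd : ∀ a b, a ≠ b → Disjoint (Z a) (Z b)) (j : Fin m) :
    (Finset.univ.filter (fun a => j ∈ Z a)).card ≤ 1 := by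
  apply Finset.card_le_one.2
  intro a ha b hb
  simp only [Finset.mem_filter] at ha hb
  by_contra hab
  exact (Finset.disjoint_left.1 (hd a b hab)) ha.2 hb.2

/-- The key payment bound: under GS bids, the English payments of any welfare-maximizing
allocation are at most the winner's bid value for their bundle. -/
lemma english_payment_le (c : Fin n → Finset (Fin m) → ℝ) (hGS : ∀ a, IsGS (c a))
    (hn : 0 < n) (A : Fin n → Finset (Fin m))
    (hdisj : ∀ a b : Fin n, a ≠ b → Disjoint (A a) (A b))
    (hopt : ∑ a, c a (A a) = W c Finset.univ) (i : Fin n) :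
    ∑ j ∈ A i, (Wmult c (fun k => if k = j then 2 else 1) - Wmult c (fun _ => 1))
      ≤ c i (A i) := by
  obtain ⟨p, B, hp0, hBdisj, hBcov, hBdem⟩ := exists_WE c hGS hn
  -- total price
  have hBprice : ∑ a, ∑ j ∈ B a, p j = ∑ j, p j := by
    rw [sum_price_swap]
    apply Finset.sum_congr rfl
    intro j _
    have hcard : (Finset.univ.filter (fun a => j ∈ B a)).card = 1 := by
      apply le_antisymm (card_filter_le_one_of_disjoint B hBdisj j)
      obtain ⟨a, ha⟩ := hBcov j
      exact Finset.card_pos.2 ⟨a, Finset.mem_filter.2 ⟨Finset.mem_univ _, ha⟩⟩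
    rw [hcard]
    simp
  -- upper bound on Wmult for any multiplicity vector
  have hWmult_le : ∀ x : Fin m → ℕ, Wmult c x ≤
      ∑ a, (c a (B a) - ∑ j ∈ B a, p j) + ∑ j, (x j : ℝ) * p j := by
    intro x
    obtain ⟨Z, hZ, hZval⟩ := Wmult_attained c x
    rw [hZval]
    have h1 : ∀ a, c a (Z a) ≤ (c a (B a) - ∑ j ∈ B a, p j) + ∑ j ∈ Z a, p j := by
      intro a
      have := hBdem a (Z a)
      linarith
    calc ∑ a, c a (Z a)
        ≤ ∑ a, ((c a (B a) - ∑ j ∈ B a, p j) + ∑ j ∈ Z a, p j) :=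
          Finset.sum_le_sum (fun a _ => h1 a)
      _ = ∑ a, (c a (B a) - ∑ j ∈ B a, p j) + ∑ a, ∑ j ∈ Z a, p j := by
          rw [Finset.sum_add_distrib]
      _ ≤ ∑ a, (c a (B a) - ∑ j ∈ B a, p j) + ∑ j, (x j : ℝ) * p j := by
          have := alloc_price_le p hp0 Z x hZ
          linarith
  -- value of Wmult at the all-ones vector
  have hone : ∑ j, ((1:ℕ) : ℝ) * p j = ∑ j, p j := by
    apply Finset.sum_congr rfl
    intro j _
    simp
  have hW1_ge : ∑ a, c a (B a) ≤ Wmult c (fun _ => 1) := by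
    apply Wmult_le
    intro j
    exact card_filter_le_one_of_disjoint B hBdisj j
  have hW1 : Wmult c (fun _ => 1)
      = ∑ a, (c a (B a) - ∑ j ∈ B a, p j) + ∑ j, p j := by
    apply le_antisymm
    · have := hWmult_le (fun _ => 1)
      rwa [hone] at this
    · rw [Finset.sum_sub_distrib, hBprice]
      have : ∑ a, c a (B a) - ∑ j, p j + ∑ j, p j = ∑ a, c a (B a) := by ring
      rw [this]
      exact hW1_ge
  -- the mechanism allocation A has value Wmult 1
  have hAopt : ∑ a, c a (A a) = Wmult c (fun _ => 1) := by
    rw [hopt, Wmult_one_eq_W]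
  -- per-agent: agent i pays at most its value at prices p
  have hAi_price : ∑ j ∈ A i, p j ≤ c i (A i) := by
    set t : Fin n → ℝ :=
      fun a => (c a (B a) - ∑ j ∈ B a, p j) + ∑ j ∈ A a, p j - c a (A a) with ht
    have hta : ∀ a, 0 ≤ t a := by
      intro a
      have := hBdem a (A a)
      simp only [ht]
      linarith
    have hsum_t : ∑ a, t a ≤ 0 := by
      have h1 : ∑ a, ∑ j ∈ A a, p j ≤ ∑ j, p j := by
        have := alloc_price_le p hp0 A (fun _ => 1)
          (fun j => card_filter_le_one_of_disjoint A hdisj j)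
        rwa [hone] at this
      have h2 : ∑ a, t a = ∑ a, (c a (B a) - ∑ j ∈ B a, p j)
          + ∑ a, ∑ j ∈ A a, p j - ∑ a, c a (A a) := by
        simp only [ht]
        rw [Finset.sum_sub_distrib, Finset.sum_add_distrib]
      rw [h2, hAopt, hW1]
      linarith
    have hti : t i ≤ 0 := by
      have := Finset.single_le_sum (fun a (_ : a ∈ Finset.univ) => hta a)
        (Finset.mem_univ i)
      linarith
    have hui : 0 ≤ c i (B i) - ∑ j ∈ B i, p j := by
      have := hBdem i ∅
      simp only [Finset.sum_empty] at this
      have h0 : c i ∅ = 0 := (hGS i).1.1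
      linarith
    simp only [ht] at hti
    linarith
  -- per-item price bound
  have hitem : ∀ j0 ∈ A i,
      Wmult c (fun k => if k = j0 then 2 else 1) - Wmult c (fun _ => 1) ≤ p j0 := by
    intro j0 _
    have hx : ∑ j, (if j = j0 then (2:ℝ) else 1) * p j = ∑ j, p j + p j0 := by
      have : ∀ j, (if j = j0 then (2:ℝ) else 1) * p j
          = p j + (if j = j0 then p j else 0) := by
        intro j
        split_ifs with h
        · ring
        · ring
      rw [Finset.sum_congr rfl (fun j _ => this j), Finset.sum_add_distrib,
        Finset.sum_ite_eq' Finset.univ j0 p]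
      simp
    have h1 := hWmult_le (fun k => if k = j0 then 2 else 1)
    push_cast at h1
    rw [hx] at h1
    rw [hW1]
    linarith
  calc ∑ j ∈ A i, (Wmult c (fun k => if k = j then 2 else 1) - Wmult c (fun _ => 1))
      ≤ ∑ j ∈ A i, p j := Finset.sum_le_sum hitem
    _ ≤ c i (A i) := hAi_price

end EngProof
namespace EngProof

variable {n m : ℕ}

lemma hole_alloc_disjoint {X : Fin n → Finset (Fin m)}
    (hXdisj : ∀ a b : Fin n, a ≠ b → Disjoint (X a) (X b)) (i : Fin n)
    (A : Finset (Fin m)) :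
    ∀ k l : Fin n, k ≠ l →
      Disjoint (if k = i then A else X k \ A) (if l = i then A else X l \ A) := by
  intro k l hkl
  by_cases hk : k = i <;> by_cases hl : l = i
  · exact absurd (hk.trans hl.symm) hkl
  · rw [if_pos hk, if_neg hl]
    exact Finset.disjoint_sdiff
  · rw [if_neg hk, if_pos hl]
    exact Finset.sdiff_disjoint
  · rw [if_neg hk, if_neg hl]
    exact Finset.disjoint_of_subset_left Finset.sdiff_subset
      (Finset.disjoint_of_subset_right Finset.sdiff_subset (hXdisj k l hkl))

lemma sdiff_erase_eq {X Y : Finset (Fin m)} {j : Fin m} (hj : j ∈ Y) :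
    X \ Y.erase j = if j ∈ X then insert j (X \ Y) else X \ Y := by
  split_ifs with hjX
  · ext a
    constructor
    · intro ha
      obtain ⟨haX, haE⟩ := Finset.mem_sdiff.1 ha
      rw [Finset.mem_insert]
      by_cases haj : a = j
      · exact Or.inl haj
      · right
        refine Finset.mem_sdiff.2 ⟨haX, fun haY => ?_⟩
        exact haE (Finset.mem_erase.2 ⟨haj, haY⟩)
    · intro ha
      rw [Finset.mem_insert] at ha
      rcases ha with rfl | haC
      · exact Finset.mem_sdiff.2 ⟨hjX, fun h => (Finset.mem_erase.1 h).1 rfl⟩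
      · obtain ⟨haX, haY⟩ := Finset.mem_sdiff.1 haC
        exact Finset.mem_sdiff.2 ⟨haX, fun h => haY (Finset.mem_erase.1 h).2⟩
  · ext a
    constructor
    · intro ha
      obtain ⟨haX, haE⟩ := Finset.mem_sdiff.1 ha
      refine Finset.mem_sdiff.2 ⟨haX, fun haY => ?_⟩
      exact haE (Finset.mem_erase.2 ⟨fun haj => hjX (haj ▸ haX), haY⟩)
    · intro ha
      obtain ⟨haX, haY⟩ := Finset.mem_sdiff.1 ha
      exact Finset.mem_sdiff.2 ⟨haX, fun h => haY (Finset.mem_erase.1 h).2⟩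

end EngProof

/-- For GS true valuations, every English Walrasian mechanism on the GS bid space
has a pure Nash equilibrium in non-exposure bids whose allocation achieves the optimal
welfare (so the price of stability is 1). -/
theorem stmt0 {n m : ℕ} (M : Mechanism n m)
    (hM : AllocDisjoint M (GSvals m)) (hpay : PayNonneg M (GSvals m))
    (hEng : IsEnglish M (GSvals m))
    (v : Fin n → Finset (Fin m) → ℝ) (hv : ∀ i, IsGS (v i)) :
    ∃ b : Fin n → Finset (Fin m) → ℝ,
      IsNash M (GSvals m) v b ∧
      (∀ i : Fin n, HasExposureFactor M (GSvals m) (v i) i (b i) 0) ∧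
      ∑ i, v i (M.alloc b i) = OPT v := by
  classical
  rcases Nat.eq_zero_or_pos n with hn0 | hn
  · -- degenerate case: no agents
    subst hn0
    refine ⟨fun _ _ => 0, ⟨fun i => i.elim0, fun i => i.elim0⟩, fun i => i.elim0, ?_⟩
    obtain ⟨X, -, -, hval⟩ := EngProof.W_attained v Finset.univ
    have h1 : OPT v = 0 := by
      rw [OPT, hval]
      simp
    rw [h1]
    simp
  -- main case: pick an optimal allocation X for the true valuations
  obtain ⟨X, hXdisj, hXsub, hXval⟩ := EngProof.W_attained v Finset.univ
  have hmono : ∀ i (S T : Finset (Fin m)), S ⊆ T → v i S ≤ v i T := fun i => (hv i).1.2.1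
  have hnn : ∀ i S, 0 ≤ v i S := fun i => (hv i).1.2.2
  set b : Fin n → Finset (Fin m) → ℝ := fun i S => v i (S ∩ X i) with hb
  have hbGS : ∀ i, IsGS (b i) := fun i => EngProof.truncation_isGS (hv i) (X i)
  have hbB : InBidSpace (GSvals m) b := fun i => hbGS i
  -- welfare of the truncated bids equals the optimum
  have hWb : W b Finset.univ = ∑ i, v i (X i) := by
    apply le_antisymm
    · obtain ⟨Z, hZd, hZs, hZv⟩ := EngProof.W_attained b Finset.univ
      rw [hZv]
      have hfeas : ∑ i, v i (Z i ∩ X i) ≤ W v Finset.univ := by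
        apply EngProof.W_le
        · intro i j hij
          exact Finset.disjoint_of_subset_left Finset.inter_subset_left
            (Finset.disjoint_of_subset_right Finset.inter_subset_left (hZd i j hij))
        · intro i
          exact Finset.subset_univ _
      rw [hXval] at hfeas
      exact hfeas
    · have h := EngProof.W_le b Finset.univ X hXdisj hXsub
      have h2 : ∑ i, b i (X i) = ∑ i, v i (X i) := by
        apply Finset.sum_congr rfl
        intro i _
        simp only [hb, Finset.inter_self]
      rwa [h2] at h
  -- any multiplicity vector (≥ 1 everywhere) gives the same welfare for truncated bids
  have hWmult_b : ∀ x : Fin m → ℕ, (∀ j, 1 ≤ x j) → Wmult b x = ∑ i, v i (X i) := by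
    intro x hx
    apply le_antisymm
    · obtain ⟨Z, hZ, hZv⟩ := EngProof.Wmult_attained b x
      rw [hZv]
      apply Finset.sum_le_sum
      intro i _
      exact hmono i _ _ Finset.inter_subset_right
    · have hcard : ∀ j : Fin m, (Finset.univ.filter fun i => j ∈ X i).card ≤ x j :=
        fun j => le_trans (EngProof.card_filter_le_one_of_disjoint X hXdisj j) (hx j)
      have h := EngProof.Wmult_le b x X hcard
      have h2 : ∑ i, b i (X i) = ∑ i, v i (X i) := by
        apply Finset.sum_congr rfl
        intro i _
        simp only [hb, Finset.inter_self]
      rwa [h2] at h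
  -- payments under b are zero
  have hpay0 : ∀ i, M.pay b i = 0 := by
    intro i
    rw [hEng.2 b hbB i]
    apply Finset.sum_eq_zero
    intro j _
    rw [hWmult_b (fun k => if k = j then 2 else 1)
        (fun k => by by_cases h : k = j <;> simp [h]),
      hWmult_b (fun _ => 1) (fun _ => le_rfl)]
    ring
  -- the allocation under b attains each agent's optimal share
  have halloc := hEng.1 b hbB
  have heach : ∀ i, v i (M.alloc b i ∩ X i) = v i (X i) := by
    have hsumeq : ∑ i, v i (M.alloc b i ∩ X i) = ∑ i, v i (X i) := by
      have h : ∑ i, b i (M.alloc b i) = ∑ i, v i (M.alloc b i ∩ X i) := rfl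
      rw [← h, halloc, hWb]
    have hle : ∀ i, v i (M.alloc b i ∩ X i) ≤ v i (X i) := fun i =>
      hmono i _ _ Finset.inter_subset_right
    intro i
    by_contra hne
    have hlt : v i (M.alloc b i ∩ X i) < v i (X i) := lt_of_le_of_ne (hle i) hne
    have h := Finset.sum_lt_sum (fun k (_ : k ∈ Finset.univ) => hle k)
      ⟨i, Finset.mem_univ i, hlt⟩
    rw [hsumeq] at h
    exact lt_irrefl _ h
  refine ⟨b, ⟨hbB, ?_⟩, ?_, ?_⟩
  · -- Nash property
    intro i bi' hbi'
    set b'' := Function.update b i bi' with hb''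
    have hb''B : InBidSpace (GSvals m) b'' := by
      intro k
      by_cases hk : k = i
      · subst hk; rw [hb'', Function.update_self]; exact hbi'
      · rw [hb'', Function.update_of_ne hk]; exact hbB k
    set Y := M.alloc b'' with hY
    have hYdisj := hM b'' hb''B
    have halloc'' := hEng.1 b'' hb''B
    set g : Finset (Fin m) → ℝ :=
      fun A => ∑ k ∈ Finset.univ.erase i, v k (X k \ A) with hg
    -- value of "hole" allocations under b''
    have hsum_split : ∀ A1 A2 : Finset (Fin m),
        ∑ k, b'' k (if k = i then A1 else X k \ A2) = bi' A1 + g A2 := by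
      intro A1 A2
      rw [← Finset.sum_erase_add Finset.univ _ (Finset.mem_univ i)]
      have h1 : b'' i (if i = i then A1 else X i \ A2) = bi' A1 := by
        rw [if_pos rfl, hb'', Function.update_self]
      have h2 : ∑ k ∈ Finset.univ.erase i, b'' k (if k = i then A1 else X k \ A2)
          = g A2 := by
        apply Finset.sum_congr rfl
        intro k hk
        have hki : k ≠ i := (Finset.mem_erase.1 hk).1
        rw [if_neg hki, hb'', Function.update_of_ne hki]
        simp only [hb]
        rw [Finset.inter_eq_left.2 Finset.sdiff_subset]
      rw [h1, h2]
      ring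
    -- lower bound on welfare from hole allocations
    have hWb''_ge : ∀ A : Finset (Fin m), bi' A + g A ≤ W b'' Finset.univ := by
      intro A
      rw [← hsum_split A A]
      exact EngProof.W_le b'' Finset.univ _
        (EngProof.hole_alloc_disjoint hXdisj i A) (fun k => Finset.subset_univ _)
    -- upper bound on welfare
    have hWb''_le : W b'' Finset.univ ≤ bi' (Y i) + g (Y i) := by
      rw [← halloc'', ← Finset.sum_erase_add Finset.univ _ (Finset.mem_univ i)]
      have h1 : b'' i (Y i) = bi' (Y i) := by rw [hb'', Function.update_self]
      have h2 : ∑ k ∈ Finset.univ.erase i, b'' k (Y k) ≤ g (Y i) := by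
        apply Finset.sum_le_sum
        intro k hk
        have hki : k ≠ i := (Finset.mem_erase.1 hk).1
        rw [hb'', Function.update_of_ne hki]
        simp only [hb]
        apply hmono
        intro a ha
        obtain ⟨haY, haX⟩ := Finset.mem_inter.1 ha
        rw [Finset.mem_sdiff]
        refine ⟨haX, fun haYi => ?_⟩
        exact (Finset.disjoint_left.1 (hYdisj k i hki)) haY haYi
      rw [h1]
      linarith
    -- per-item lower bound on Wmult with a doubled item
    have hitem : ∀ j ∈ Y i, bi' (Y i) + g ((Y i).erase j)
        ≤ Wmult b'' (fun k => if k = j then 2 else 1) := by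
      intro j hjY
      rw [← hsum_split (Y i) ((Y i).erase j)]
      apply EngProof.Wmult_le
      intro l
      by_cases hlj : l = j
      · rw [if_pos hlj]
        have hsub : (Finset.univ.filter
            (fun k => l ∈ (if k = i then Y i else X k \ ((Y i).erase j))))
            ⊆ insert i (Finset.univ.filter (fun k => l ∈ X k)) := by
          intro a ha
          obtain ⟨-, ha2⟩ := Finset.mem_filter.1 ha
          by_cases hai : a = i
          · rw [hai]; exact Finset.mem_insert_self _ _
          · rw [if_neg hai] at ha2
            exact Finset.mem_insert_of_mem
              (Finset.mem_filter.2 ⟨Finset.mem_univ _, (Finset.mem_sdiff.1 ha2).1⟩)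
        calc (Finset.univ.filter
            (fun k => l ∈ (if k = i then Y i else X k \ ((Y i).erase j)))).card
            ≤ (insert i (Finset.univ.filter (fun k => l ∈ X k))).card :=
              Finset.card_le_card hsub
          _ ≤ (Finset.univ.filter (fun k => l ∈ X k)).card + 1 :=
              Finset.card_insert_le _ _
          _ ≤ 2 := by
              have := EngProof.card_filter_le_one_of_disjoint X hXdisj l
              omega
      · rw [if_neg hlj]
        apply Finset.card_le_one.2
        intro a ha c hc
        obtain ⟨-, ha2⟩ := Finset.mem_filter.1 ha
        obtain ⟨-, hc2⟩ := Finset.mem_filter.1 hc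
        by_cases hai : a = i <;> by_cases hci : c = i
        · rw [hai, hci]
        · exfalso
          rw [if_pos hai] at ha2
          rw [if_neg hci] at hc2
          exact (Finset.mem_sdiff.1 hc2).2 (Finset.mem_erase.2 ⟨hlj, ha2⟩)
        · exfalso
          rw [if_neg hai] at ha2
          rw [if_pos hci] at hc2
          exact (Finset.mem_sdiff.1 ha2).2 (Finset.mem_erase.2 ⟨hlj, hc2⟩)
        · rw [if_neg hai] at ha2
          rw [if_neg hci] at hc2
          by_contra hac
          exact (Finset.disjoint_left.1 (hXdisj a c hac))
            (Finset.mem_sdiff.1 ha2).1 (Finset.mem_sdiff.1 hc2).1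
    -- payment lower bound under deviation
    have hpay_ge : g ∅ - g (Y i) ≤ M.pay b'' i := by
      rw [hEng.2 b'' hb''B i]
      have hW1'' : Wmult b'' (fun _ => 1) ≤ bi' (Y i) + g (Y i) := by
        rw [EngProof.Wmult_one_eq_W]
        exact hWb''_le
      have hterm : ∀ j ∈ Y i, g ((Y i).erase j) - g (Y i) ≤
          Wmult b'' (fun k => if k = j then 2 else 1) - Wmult b'' (fun _ => 1) := by
        intro j hj
        have := hitem j hj
        linarith
      have hsum1 : ∑ j ∈ Y i, (g ((Y i).erase j) - g (Y i)) ≤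
          ∑ j ∈ Y i, (Wmult b'' (fun k => if k = j then 2 else 1)
            - Wmult b'' (fun _ => 1)) := Finset.sum_le_sum hterm
      have hsum2 : g ∅ - g (Y i) ≤ ∑ j ∈ Y i, (g ((Y i).erase j) - g (Y i)) := by
        have h1 : ∀ j, g ((Y i).erase j) - g (Y i) = ∑ k ∈ Finset.univ.erase i,
            (v k (X k \ (Y i).erase j) - v k (X k \ Y i)) := by
          intro j
          simp only [hg]
          rw [← Finset.sum_sub_distrib]
        have h2 : g ∅ - g (Y i) = ∑ k ∈ Finset.univ.erase i,
            (v k (X k) - v k (X k \ Y i)) := by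
          simp only [hg]
          rw [← Finset.sum_sub_distrib]
          apply Finset.sum_congr rfl
          intro k _
          rw [Finset.sdiff_empty]
        have hperk : ∀ k ∈ Finset.univ.erase i,
            v k (X k) - v k (X k \ Y i) ≤
            ∑ j ∈ Y i, (v k (X k \ (Y i).erase j) - v k (X k \ Y i)) := by
          intro k _
          set C : Finset (Fin m) := X k \ Y i with hC
          set D : Finset (Fin m) := X k ∩ Y i with hD
          have hCD : Disjoint C D := by
            rw [Finset.disjoint_left]
            intro a haC haD
            exact (Finset.mem_sdiff.1 haC).2 (Finset.mem_inter.1 haD).2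
          have hCuD : C ∪ D = X k := by
            simp only [hC, hD]
            exact Finset.sdiff_union_inter _ _
          have hsumD : ∑ j ∈ Y i, (v k (X k \ (Y i).erase j) - v k (X k \ Y i))
              = ∑ j ∈ D, (v k (insert j C) - v k C) := by
            rw [← Finset.sum_subset (show D ⊆ Y i from Finset.inter_subset_right)
              (fun j hjY hjD => ?_)]
            · apply Finset.sum_congr rfl
              intro j hjD
              obtain ⟨hjX, hjY⟩ := Finset.mem_inter.1 hjD
              rw [EngProof.sdiff_erase_eq hjY, if_pos hjX]
            · have hjX : j ∉ X k := by
                intro hjX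
                exact hjD (Finset.mem_inter.2 ⟨hjX, hjY⟩)
              rw [EngProof.sdiff_erase_eq hjY, if_neg hjX]
              ring
          rw [hsumD]
          have := EngProof.gs_sum_marginals (hv k) C D hCD
          rw [hCuD] at this
          have hCeq : v k C = v k (X k \ Y i) := rfl
          calc v k (X k) - v k (X k \ Y i) = v k (X k) - v k C := by rw [hCeq]
            _ ≤ ∑ j ∈ D, (v k (insert j C) - v k C) := by linarith
        calc g ∅ - g (Y i)
            = ∑ k ∈ Finset.univ.erase i, (v k (X k) - v k (X k \ Y i)) := h2
          _ ≤ ∑ k ∈ Finset.univ.erase i, ∑ j ∈ Y i,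
              (v k (X k \ (Y i).erase j) - v k (X k \ Y i)) :=
              Finset.sum_le_sum hperk
          _ = ∑ j ∈ Y i, ∑ k ∈ Finset.univ.erase i,
              (v k (X k \ (Y i).erase j) - v k (X k \ Y i)) := Finset.sum_comm
          _ = ∑ j ∈ Y i, (g ((Y i).erase j) - g (Y i)) := by
              apply Finset.sum_congr rfl
              intro j _
              rw [h1 j]
      linarith
    -- true welfare bound for the deviation outcome
    have htrue : v i (Y i) + g (Y i) ≤ ∑ k, v k (X k) := by
      have hfeas := EngProof.W_le v Finset.univ
        (fun k => if k = i then Y i else X k \ Y i)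
        (EngProof.hole_alloc_disjoint hXdisj i (Y i)) (fun k => Finset.subset_univ _)
      have hval : ∑ k, v k (if k = i then Y i else X k \ Y i)
          = v i (Y i) + g (Y i) := by
        rw [← Finset.sum_erase_add Finset.univ _ (Finset.mem_univ i)]
        have h1 : v i (if i = i then Y i else X i \ Y i) = v i (Y i) := by
          rw [if_pos rfl]
        have h2 : ∑ k ∈ Finset.univ.erase i,
            v k (if k = i then Y i else X k \ Y i) = g (Y i) := by
          apply Finset.sum_congr rfl
          intro k hk
          rw [if_neg (Finset.mem_erase.1 hk).1]
        rw [h1, h2]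
        ring
      rw [hval] at hfeas
      rw [← hXval]
      exact hfeas
    have hgempty : g ∅ = ∑ k, v k (X k) - v i (X i) := by
      simp only [hg]
      rw [Finset.sum_congr rfl (fun k (_ : k ∈ Finset.univ.erase i) => by
        rw [Finset.sdiff_empty]),
        Finset.sum_erase_eq_sub (Finset.mem_univ i)]
    -- conclude the Nash inequality
    simp only [util]
    rw [hpay0 i]
    have hub : v i (M.alloc b i) ≥ v i (X i) := by
      rw [← heach i]
      exact hmono i _ _ Finset.inter_subset_left
    have hYival : v i (Y i) - M.pay b'' i ≤ v i (X i) := by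
      have := hpay_ge
      rw [hgempty] at this
      linarith
    rw [← hb''] at *
    rw [← hY] at *
    linarith
  · -- non-exposure
    intro i prof hprofB hprofi
    have hprofGS : ∀ a, IsGS (prof a) := hprofB
    have hstar := EngProof.english_payment_le prof hprofGS hn (M.alloc prof)
      (hM prof hprofB) (hEng.1 prof hprofB) i
    rw [hEng.2 prof hprofB i]
    calc ∑ j ∈ M.alloc prof i, (Wmult prof (fun k => if k = j then 2 else 1)
          - Wmult prof (fun _ => 1))
        ≤ prof i (M.alloc prof i) := hstar
      _ = v i (M.alloc prof i ∩ X i) := by rw [hprofi]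
      _ ≤ v i (M.alloc prof i) := hmono i _ _ Finset.inter_subset_left
      _ = (1 + 0) * v i (M.alloc prof i) := by ring
  · -- optimal welfare
    apply le_antisymm
    · have h := EngProof.W_le v Finset.univ (M.alloc b) (hM b hbB)
        (fun i => Finset.subset_univ _)
      rw [OPT]
      exact h
    · rw [OPT, hXval]
      apply Finset.sum_le_sum
      intro i _
      rw [← heach i]
      exact hmono i _ _ Finset.inter_subset_left
end

section
/- Let both the valuation space 𝒱 and the bid space 𝓑 equal the set of XOS valuations, let the mechanism be any declared welfare maximizer, and let D be a finitely supported probability distribution on 𝒱^n (valuations of different agents may be correlated). Then for every γ ≥ 0 and every Bayes-Nash equilibrium strategy profile s = (s_1, …, s_n) in which each s_i has exposure factor γ under D, it holds that (6 + 4γ) · E_{v∼D}[ ∑_i v_i(X_i(s(v))) ] ≥ E_{v∼D}[ OPT(v) ]. In other words, BPoA_γ ≤ 6 + 4γ. -/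
open Finset

section Aux

variable {n m : ℕ}

lemma xos_empty {v : Finset (Fin m) → ℝ} (h : IsXOS v) : v ∅ = 0 := by
  obtain ⟨k, w, hw, hv⟩ := h
  rw [hv]
  apply le_antisymm
  · exact Finset.sup'_le _ _ (fun i _ => by simp)
  · exact Finset.le_sup'_of_le _ (Finset.mem_univ 0) (by simp)

lemma xos_mono {v : Finset (Fin m) → ℝ} (h : IsXOS v) {S T : Finset (Fin m)}
    (hST : S ⊆ T) : v S ≤ v T := by
  obtain ⟨k, w, hw, hv⟩ := h
  rw [hv, hv]
  exact Finset.sup'_le _ _ fun i _ => Finset.le_sup'_of_le _ (Finset.mem_univ i)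
    (Finset.sum_le_sum_of_subset_of_nonneg hST (fun j _ _ => hw i j))

lemma xos_nonneg {v : Finset (Fin m) → ℝ} (h : IsXOS v) (S : Finset (Fin m)) : 0 ≤ v S := by
  obtain ⟨k, w, hw, hv⟩ := h
  rw [hv]
  exact Finset.le_sup'_of_le _ (Finset.mem_univ 0) (Finset.sum_nonneg fun j _ => hw 0 j)

lemma xos_half {v : Finset (Fin m) → ℝ} (h : IsXOS v) : IsXOS (fun S => v S / 2) := by
  obtain ⟨k, w, hw, hv⟩ := h
  refine ⟨k, fun i j => w i j / 2, fun i j => div_nonneg (hw i j) (by norm_num), fun S => ?_⟩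
  show v S / 2 = _
  rw [hv]
  have hc := Finset.comp_sup'_eq_sup'_comp (s := (Finset.univ : Finset (Fin (k+1))))
    Finset.univ_nonempty (f := fun i => ∑ j ∈ S, w i j) (fun x : ℝ => x / 2)
    (fun x y => (max_div_div_right (c := 2) (by norm_num) x y).symm)
  simp only [Function.comp] at hc
  rw [hc]
  exact Finset.sup'_congr _ rfl (fun i _ => by simp [Finset.sum_div])

lemma xos_support {v : Finset (Fin m) → ℝ} (h : IsXOS v) (X : Finset (Fin m)) :
    ∃ p : Fin m → ℝ, (∀ j, 0 ≤ p j) ∧ v X = ∑ j ∈ X, p j ∧ ∀ S, ∑ j ∈ S, p j ≤ v S := by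
  obtain ⟨k, w, hw, hv⟩ := h
  obtain ⟨i, _, hi⟩ := Finset.exists_mem_eq_sup' Finset.univ_nonempty
    (fun i => ∑ j ∈ X, w i j)
  refine ⟨w i, hw i, by rw [hv, hi], fun S => ?_⟩
  rw [hv]
  exact Finset.le_sup'_of_le _ (Finset.mem_univ i) le_rfl

lemma sw_le_W (b : Fin n → Finset (Fin m) → ℝ) (X : Fin n → Finset (Fin m))
    (hX : ∀ i j : Fin n, i ≠ j → Disjoint (X i) (X j)) :
    ∑ i, b i (X i) ≤ W b Finset.univ := by
  apply le_csSup
  · refine BddAbove.mono ?_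
      (Set.Finite.bddAbove (Set.finite_range (fun Y : Fin n → Finset (Fin m) => ∑ i, b i (Y i))))
    rintro t ⟨Y, -, -, rfl⟩
    exact ⟨Y, rfl⟩
  · exact ⟨X, hX, fun i => Finset.subset_univ _, rfl⟩

lemma opt_attained (v : Fin n → Finset (Fin m) → ℝ) :
    ∃ O : Fin n → Finset (Fin m), (∀ i j : Fin n, i ≠ j → Disjoint (O i) (O j)) ∧
      OPT v = ∑ i, v i (O i) := by
  have hne : {t : ℝ | ∃ X : Fin n → Finset (Fin m),
      (∀ i j : Fin n, i ≠ j → Disjoint (X i) (X j)) ∧ (∀ i, X i ⊆ Finset.univ) ∧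
      t = ∑ i, v i (X i)}.Nonempty :=
    ⟨∑ i, v i ∅, fun _ => ∅, fun i j _ => disjoint_bot_left, fun i => Finset.empty_subset _, rfl⟩
  have hfin : {t : ℝ | ∃ X : Fin n → Finset (Fin m),
      (∀ i j : Fin n, i ≠ j → Disjoint (X i) (X j)) ∧ (∀ i, X i ⊆ Finset.univ) ∧
      t = ∑ i, v i (X i)}.Finite := by
    refine Set.Finite.subset
      (Set.finite_range (fun Y : Fin n → Finset (Fin m) => ∑ i, v i (Y i))) ?_
    rintro t ⟨Y, -, -, rfl⟩
    exact ⟨Y, rfl⟩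
  obtain ⟨O, hd, -, ht⟩ := hne.csSup_mem hfin
  exact ⟨O, hd, ht⟩

lemma exp_mono {α : Type*} (D : FinDist α) {f g : α → ℝ} (h : ∀ a ∈ D.supp, f a ≤ g a) :
    D.exp f ≤ D.exp g :=
  Finset.sum_le_sum fun a ha => mul_le_mul_of_nonneg_left (h a ha) (D.nonneg a)

lemma exp_sub {α : Type*} (D : FinDist α) (f g : α → ℝ) :
    D.exp (fun a => f a - g a) = D.exp f - D.exp g := by
  simp [FinDist.exp, mul_sub, Finset.sum_sub_distrib]

lemma exp_sum {α ι : Type*} (D : FinDist α) (t : Finset ι) (f : ι → α → ℝ) :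
    D.exp (fun a => ∑ i ∈ t, f i a) = ∑ i ∈ t, D.exp (f i) := by
  simp only [FinDist.exp, Finset.mul_sum]
  exact Finset.sum_comm

lemma smooth_pointwise {n m : ℕ} (M : Mechanism n m)
    (hM : AllocDisjoint M (XOSvals m)) (hDWM : IsDWM M (XOSvals m))
    (s : Fin n → (Finset (Fin m) → ℝ) → Finset (Fin m) → ℝ)
    (v : Fin n → Finset (Fin m) → ℝ) (hv : ∀ i, v i ∈ XOSvals m)
    (hb : ∀ i, s i (v i) ∈ XOSvals m) :
    (1/2) * OPT v ≤
      (∑ i, util M (v i) i (Function.update (fun k => s k (v k)) i (fun S => v i S / 2)))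
      + 2 * ∑ k, (s k (v k)) (M.alloc (fun k => s k (v k)) k) := by
  classical
  set b : Fin n → Finset (Fin m) → ℝ := fun k => s k (v k) with hbdef
  have hbB : InBidSpace (XOSvals m) b := fun k => hb k
  obtain ⟨O, hOdisj, hOopt⟩ := opt_attained v
  choose p hp0 hpX hpS using fun k => xos_support (hbB k) (M.alloc b k)
  have hWb : ∑ k, b k (M.alloc b k) = W b Finset.univ := hDWM.1 b hbB
  -- per-agent bound
  have key : ∀ i : Fin n,
      v i (O i) / 2 - b i (M.alloc b i)
        - ∑ k ∈ Finset.univ.erase i, ∑ j ∈ M.alloc b k ∩ O i, p k j ≤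
      util M (v i) i (Function.update b i (fun S => v i S / 2)) := by
    intro i
    set Bi : Fin n → Finset (Fin m) → ℝ := Function.update b i (fun S => v i S / 2)
      with hBidef
    have hBii : ∀ T, Bi i T = v i T / 2 := fun T => by
      rw [hBidef, Function.update_self]
    have hBik : ∀ k, k ≠ i → Bi k = b k := fun k hk => by
      rw [hBidef, Function.update_of_ne hk]
    have hBiB : InBidSpace (XOSvals m) Bi := by
      intro k
      by_cases hk : k = i
      · subst hk
        have : IsXOS (fun S => v k S / 2) := xos_half (hv k)
        simpa [hBidef, Function.update_self, XOSvals, Set.mem_setOf_eq] using this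
      · rw [hBik k hk]; exact hbB k
    set A : Fin n → Finset (Fin m) := M.alloc Bi with hAdef
    have hutil : v i (A i) / 2 ≤ util M (v i) i Bi := by
      have hpayA : M.pay Bi i ≤ v i (A i) / 2 := by
        have h := hDWM.2.1 Bi hBiB i
        rwa [hBii] at h
      unfold util
      linarith
    have hWBi : ∑ k, Bi k (A k) = W Bi Finset.univ := hDWM.1 Bi hBiB
    set Z : Fin n → Finset (Fin m) := fun k => if k = i then O i else M.alloc b k \ O i
      with hZdef
    have hZdisj : ∀ k l : Fin n, k ≠ l → Disjoint (Z k) (Z l) := by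
      intro k l hkl
      by_cases hk : k = i <;> by_cases hl : l = i
      · exact absurd (hk.trans hl.symm) hkl
      · simp only [hZdef, if_pos hk, if_neg hl]
        exact Finset.sdiff_disjoint.symm
      · simp only [hZdef, if_neg hk, if_pos hl]
        exact Finset.sdiff_disjoint
      · simp only [hZdef, if_neg hk, if_neg hl]
        exact (hM b hbB k l hkl).mono Finset.sdiff_subset Finset.sdiff_subset
    have hZle : ∑ k, Bi k (Z k) ≤ W Bi Finset.univ := sw_le_W Bi Z hZdisj
    have hsumA : ∑ k, Bi k (A k)
        = v i (A i) / 2 + ∑ k ∈ Finset.univ.erase i, b k (A k) := by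
      rw [← Finset.add_sum_erase _ (fun k => Bi k (A k)) (Finset.mem_univ i), hBii]
      congr 1
      exact Finset.sum_congr rfl fun k hk => by rw [hBik k (Finset.mem_erase.1 hk).1]
    have hsumZ : ∑ k, Bi k (Z k)
        = v i (O i) / 2 + ∑ k ∈ Finset.univ.erase i, b k (M.alloc b k \ O i) := by
      rw [← Finset.add_sum_erase _ (fun k => Bi k (Z k)) (Finset.mem_univ i)]
      have hZi : Z i = O i := by rw [hZdef]; simp
      rw [hZi, hBii]
      congr 1
      refine Finset.sum_congr rfl fun k hk => ?_
      have hki : k ≠ i := (Finset.mem_erase.1 hk).1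
      rw [hBik k hki]
      congr 1
      rw [hZdef]
      simp [hki]
    have hothers : ∑ k ∈ Finset.univ.erase i, b k (A k) ≤ ∑ k, b k (M.alloc b k) := by
      have hA'disj : ∀ k l : Fin n, k ≠ l →
          Disjoint (Function.update A i ∅ k) (Function.update A i ∅ l) := by
        intro k l hkl
        by_cases hk : k = i <;> by_cases hl : l = i
        · exact absurd (hk.trans hl.symm) hkl
        · subst hk; rw [Function.update_self]; exact Finset.disjoint_empty_left _
        · subst hl; rw [Function.update_self]; exact Finset.disjoint_empty_right _
        · rw [Function.update_of_ne hk, Function.update_of_ne hl]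
          exact hM Bi hBiB k l hkl
      have h1 := sw_le_W b (Function.update A i ∅) hA'disj
      have h2 : ∑ k, b k (Function.update A i ∅ k)
          = ∑ k ∈ Finset.univ.erase i, b k (A k) := by
        rw [← Finset.add_sum_erase _ (fun k => b k (Function.update A i ∅ k))
          (Finset.mem_univ i), Function.update_self, xos_empty (hbB i), zero_add]
        exact Finset.sum_congr rfl fun k hk => by
          rw [Function.update_of_ne (Finset.mem_erase.1 hk).1]
      rw [hWb]
      rw [h2] at h1
      exact h1
    have hcutsum : ∑ k ∈ Finset.univ.erase i, b k (M.alloc b k)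
          - ∑ k ∈ Finset.univ.erase i, ∑ j ∈ M.alloc b k ∩ O i, p k j
        ≤ ∑ k ∈ Finset.univ.erase i, b k (M.alloc b k \ O i) := by
      rw [← Finset.sum_sub_distrib]
      refine Finset.sum_le_sum fun k _ => ?_
      have h1 : ∑ j ∈ M.alloc b k \ O i, p k j ≤ b k (M.alloc b k \ O i) := hpS k _
      have h2 : ∑ j ∈ M.alloc b k \ O i, p k j
          = ∑ j ∈ M.alloc b k, p k j - ∑ j ∈ M.alloc b k ∩ O i, p k j := by
        rw [← Finset.sdiff_inter_self_left (M.alloc b k) (O i)]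
        exact Finset.sum_sdiff_eq_sub Finset.inter_subset_left
      rw [h2] at h1
      have h3 := hpX k
      linarith
    have herase : ∑ k ∈ Finset.univ.erase i, b k (M.alloc b k)
        = ∑ k, b k (M.alloc b k) - b i (M.alloc b i) := by
      have h := Finset.add_sum_erase Finset.univ (fun k => b k (M.alloc b k))
        (Finset.mem_univ i)
      linarith
    have hfinal : v i (O i) / 2 - b i (M.alloc b i)
        - ∑ k ∈ Finset.univ.erase i, ∑ j ∈ M.alloc b k ∩ O i, p k j ≤ v i (A i) / 2 := by
      linarith
    exact le_trans hfinal hutil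
  -- the price terms sum to at most the declared welfare
  have hQ : ∑ i, ∑ k ∈ Finset.univ.erase i, ∑ j ∈ M.alloc b k ∩ O i, p k j
      ≤ ∑ k, b k (M.alloc b k) := by
    have h1 : ∑ i, ∑ k ∈ Finset.univ.erase i, ∑ j ∈ M.alloc b k ∩ O i, p k j
        ≤ ∑ i : Fin n, ∑ k, ∑ j ∈ M.alloc b k ∩ O i, p k j := by
      refine Finset.sum_le_sum fun i _ => ?_
      exact Finset.sum_le_sum_of_subset_of_nonneg (Finset.erase_subset _ _)
        (fun k _ _ => Finset.sum_nonneg fun j _ => hp0 k j)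
    have h2 : ∑ i : Fin n, ∑ k, ∑ j ∈ M.alloc b k ∩ O i, p k j
        = ∑ k : Fin n, ∑ i, ∑ j ∈ M.alloc b k ∩ O i, p k j := Finset.sum_comm
    have h3 : ∀ k : Fin n, ∑ i, ∑ j ∈ M.alloc b k ∩ O i, p k j ≤ b k (M.alloc b k) := by
      intro k
      rw [hpX k]
      have hrw : ∀ i : Fin n, ∑ j ∈ M.alloc b k ∩ O i, p k j
          = ∑ j ∈ M.alloc b k, if j ∈ O i then p k j else 0 := by
        intro i
        rw [← Finset.filter_mem_eq_inter, Finset.sum_filter]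
      simp_rw [hrw]
      rw [Finset.sum_comm]
      refine Finset.sum_le_sum fun j _ => ?_
      by_cases hex : ∃ i0 : Fin n, j ∈ O i0
      · obtain ⟨i0, hi0⟩ := hex
        rw [Finset.sum_eq_single i0]
        · simp [hi0]
        · intro i1 _ hne
          have hnotin : j ∉ O i1 := fun hj =>
            Finset.disjoint_left.1 (hOdisj i1 i0 hne) hj hi0
          simp [hnotin]
        · intro h; exact absurd (Finset.mem_univ i0) h
      · push_neg at hex
        simp only [hex, if_false]
        rw [Finset.sum_const_zero]
        exact hp0 k j
    calc ∑ i, ∑ k ∈ Finset.univ.erase i, ∑ j ∈ M.alloc b k ∩ O i, p k j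
        ≤ ∑ i : Fin n, ∑ k, ∑ j ∈ M.alloc b k ∩ O i, p k j := h1
      _ = ∑ k : Fin n, ∑ i, ∑ j ∈ M.alloc b k ∩ O i, p k j := h2
      _ ≤ ∑ k, b k (M.alloc b k) := Finset.sum_le_sum fun k _ => h3 k
  have hkeysum : ∑ i, (v i (O i) / 2 - b i (M.alloc b i)
        - ∑ k ∈ Finset.univ.erase i, ∑ j ∈ M.alloc b k ∩ O i, p k j)
      ≤ ∑ i, util M (v i) i (Function.update b i (fun S => v i S / 2)) :=
    Finset.sum_le_sum fun i _ => key i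
  rw [Finset.sum_sub_distrib, Finset.sum_sub_distrib] at hkeysum
  have hOsum : ∑ i, v i (O i) / 2 = (1/2) * OPT v := by
    rw [hOopt, Finset.mul_sum]
    exact Finset.sum_congr rfl fun i _ => by ring
  linarith


lemma exp_add {α : Type*} (D : FinDist α) (f g : α → ℝ) :
    D.exp (fun a => f a + g a) = D.exp f + D.exp g := by
  simp [FinDist.exp, mul_add, Finset.sum_add_distrib]

lemma exp_const_mul {α : Type*} (D : FinDist α) (c : ℝ) (f : α → ℝ) :
    D.exp (fun a => c * f a) = c * D.exp f := by
  simp only [FinDist.exp, Finset.mul_sum]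
  exact Finset.sum_congr rfl fun a _ => by ring

lemma bid_value_bound {n m : ℕ} (M : Mechanism n m) (hDWM : IsDWM M (XOSvals m))
    (γ : ℝ) (D : FinDist (Fin n → Finset (Fin m) → ℝ))
    (hD : ∀ v ∈ D.supp, ∀ i : Fin n, v i ∈ XOSvals m)
    (s : Fin n → (Finset (Fin m) → ℝ) → Finset (Fin m) → ℝ)
    (hs : ∀ i : Fin n, ∀ vi ∈ XOSvals m, s i vi ∈ XOSvals m) (i : Fin n)
    (hexp : BayesExposure M (XOSvals m) (XOSvals m) D i (s i) γ) :
    D.exp (fun v => s i (v i) (M.alloc (fun k => s k (v k)) i)) ≤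
      (1 + γ) * D.exp (fun v => (v i) (M.alloc (fun k => s k (v k)) i)) := by
  classical
  set g : (Fin n → Finset (Fin m) → ℝ) → ℝ := fun u =>
    s i (u i) (M.alloc (fun k => s k (u k)) i)
      - (1 + γ) * (u i) (M.alloc (fun k => s k (u k)) i) with hgdef
  have hclaim : ∀ a : Finset (Fin m) → ℝ, ∃ cp : Fin n → Finset (Fin m) → ℝ,
      (a ∈ XOSvals m → InBidSpace (XOSvals m) cp ∧ cp i = s i a) ∧
      (∀ u ∈ D.supp, u i = a →
        g u ≤ M.pay cp i - (1 + γ) * a (M.alloc cp i)) := by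
    intro a
    by_cases h : (D.supp.filter (fun u => u i = a)).Nonempty
    · obtain ⟨w, hwmem, hwmax⟩ := Finset.exists_max_image _ g h
      have hwsupp : w ∈ D.supp := (Finset.mem_filter.1 hwmem).1
      have hwi : w i = a := (Finset.mem_filter.1 hwmem).2
      have hwB : InBidSpace (XOSvals m) (fun k => s k (w k)) :=
        fun k => hs k (w k) (hD w hwsupp k)
      obtain ⟨b', hb'B, hb'i, hb'alloc, hb'pay⟩ := hDWM.2.2 _ hwB i
      refine ⟨b', fun _ => ⟨hb'B, by rw [hb'i, hwi]⟩, fun u hu hui => ?_⟩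
      have hgu : g u ≤ g w := hwmax u (Finset.mem_filter.2 ⟨hu, hui⟩)
      have heq : M.pay b' i - (1 + γ) * a (M.alloc b' i) = g w := by
        rw [hb'pay, hb'alloc, hgdef, ← hwi]
      rw [heq]
      exact hgu
    · refine ⟨fun k => s k a, fun ha => ⟨fun k => hs k a ha, rfl⟩, fun u hu hui => ?_⟩
      exact absurd ⟨u, Finset.mem_filter.2 ⟨hu, hui⟩⟩ h
  choose c hc using hclaim
  have hce := hexp c (fun vi hvi => (hc vi).1 hvi)
  have h1 : D.exp g ≤
      D.exp (fun v => M.pay (c (v i)) i - (1 + γ) * (v i) (M.alloc (c (v i)) i)) :=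
    exp_mono D fun u hu => (hc (u i)).2 u hu rfl
  rw [exp_sub, exp_const_mul, exp_sub, exp_const_mul] at h1
  linarith

end Aux

/-- BPoA_γ ≤ 6 + 4γ for declared welfare maximizers with XOS valuations and bids,
for any (possibly correlated) finitely supported distribution over valuation profiles. -/
theorem stmt3 {n m : ℕ} (M : Mechanism n m)
    (hM : AllocDisjoint M (XOSvals m)) (hpay : PayNonneg M (XOSvals m))
    (hDWM : IsDWM M (XOSvals m))
    (γ : ℝ) (hγ : 0 ≤ γ)
    (D : FinDist (Fin n → Finset (Fin m) → ℝ))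
    (hD : ∀ v ∈ D.supp, ∀ i : Fin n, v i ∈ XOSvals m)
    (s : Fin n → (Finset (Fin m) → ℝ) → Finset (Fin m) → ℝ)
    (hBNE : IsBNE M (XOSvals m) (XOSvals m) D s)
    (hexp : ∀ i : Fin n, BayesExposure M (XOSvals m) (XOSvals m) D i (s i) γ) :
    D.exp (fun v => OPT v) ≤
      (6 + 4 * γ) * D.exp (fun v => ∑ i, v i (M.alloc (fun k => s k (v k)) i)) := by
  classical
  have hsV : ∀ i : Fin n, ∀ vi ∈ XOSvals m, s i vi ∈ XOSvals m := hBNE.1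
  -- pointwise smoothness, in expectation
  have hsm : ∀ v ∈ D.supp, (1/2) * OPT v ≤
      (∑ i, util M (v i) i (Function.update (fun k => s k (v k)) i (fun S => v i S / 2)))
      + 2 * ∑ k, (s k (v k)) (M.alloc (fun k => s k (v k)) k) :=
    fun v hv => smooth_pointwise M hM hDWM s v (hD v hv)
      (fun i => hsV i (v i) (hD v hv i))
  have hE1 := exp_mono D hsm
  rw [exp_const_mul, exp_add, exp_const_mul] at hE1
  rw [exp_sum] at hE1
  -- each deviation utility is at most the equilibrium utility (BNE)
  have hdev : ∀ i : Fin n,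
      D.exp (fun v => util M (v i) i
        (Function.update (fun k => s k (v k)) i (fun S => v i S / 2))) ≤
      D.exp (fun v => util M (v i) i (fun k => s k (v k))) := fun i =>
    hBNE.2 i (fun x S => x S / 2) (fun vi hvi => xos_half hvi)
  -- equilibrium utilities are at most values
  have hutil_le : ∀ v ∈ D.supp,
      ∑ i, util M (v i) i (fun k => s k (v k)) ≤
      ∑ i, v i (M.alloc (fun k => s k (v k)) i) := by
    intro v hv
    refine Finset.sum_le_sum fun i _ => ?_
    have h0 : 0 ≤ M.pay (fun k => s k (v k)) i :=
      hpay _ (fun k => hsV k (v k) (hD v hv k)) i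
    show v i (M.alloc (fun k => s k (v k)) i) - M.pay (fun k => s k (v k)) i ≤ _
    linarith
  have hutilE : ∑ i, D.exp (fun v => util M (v i) i (fun k => s k (v k))) ≤
      D.exp (fun v => ∑ i, v i (M.alloc (fun k => s k (v k)) i)) := by
    rw [← exp_sum]
    exact exp_mono D hutil_le
  -- bid values at equilibrium are bounded using exposure
  have hbid : ∀ i : Fin n,
      D.exp (fun v => s i (v i) (M.alloc (fun k => s k (v k)) i)) ≤
      (1 + γ) * D.exp (fun v => (v i) (M.alloc (fun k => s k (v k)) i)) :=
    fun i => bid_value_bound M hDWM γ D hD s hsV i (hexp i)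
  have hbidsum : D.exp (fun v => ∑ k, (s k (v k)) (M.alloc (fun k => s k (v k)) k)) ≤
      (1 + γ) * D.exp (fun v => ∑ i, v i (M.alloc (fun k => s k (v k)) i)) := by
    rw [exp_sum]
    calc ∑ k, D.exp (fun v => (s k (v k)) (M.alloc (fun k' => s k' (v k')) k))
        ≤ ∑ k, (1 + γ) * D.exp (fun v => (v k) (M.alloc (fun k' => s k' (v k')) k)) :=
          Finset.sum_le_sum fun k _ => hbid k
      _ = (1 + γ) * D.exp (fun v => ∑ i, v i (M.alloc (fun k => s k (v k)) i)) := by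
          rw [exp_sum, Finset.mul_sum]
  have hdevsum : ∑ i, D.exp (fun v => util M (v i) i
        (Function.update (fun k => s k (v k)) i (fun S => v i S / 2))) ≤
      ∑ i, D.exp (fun v => util M (v i) i (fun k => s k (v k))) :=
    Finset.sum_le_sum fun i _ => hdev i
  set EO := D.exp (fun v => OPT v) with hEO
  set ES := D.exp (fun v => ∑ i, v i (M.alloc (fun k => s k (v k)) i)) with hES
  have hkey : (6 + 4 * γ) * ES = 2 * ES + 4 * ((1 + γ) * ES) := by ring
  rw [hkey]
  linarith
end

section
/- Let both the valuation space and the bid space 𝓑 equal the set of gross substitutes (GS) valuations, and consider the VCG mechanism. Then for every γ ≥ 0, every profile v = (v_1, …, v_n) of GS valuations, and every pure Nash equilibrium b for v in which each bid b_i has exposure factor γ, it holds that (2 + γ) · ∑_i v_i(X_i(b)) ≥ OPT(v). In other words, for the VCG mechanism with GS valuations, PoA_γ ≤ 2 + γ. -/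
open Finset

/-! ### Auxiliary lemmas for the proof of `stmt4` -/

namespace PoA

open Finset

section plumbing

variable {n m : ℕ}

/-- The set underlying `W b S`. -/
lemma W_set_finite (b : Fin n → Finset (Fin m) → ℝ) (S : Finset (Fin m)) :
    {t : ℝ | ∃ X : Fin n → Finset (Fin m),
      (∀ i j : Fin n, i ≠ j → Disjoint (X i) (X j)) ∧ (∀ i, X i ⊆ S) ∧
      t = ∑ i, b i (X i)}.Finite := by
  have : {t : ℝ | ∃ X : Fin n → Finset (Fin m),
      (∀ i j : Fin n, i ≠ j → Disjoint (X i) (X j)) ∧ (∀ i, X i ⊆ S) ∧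
      t = ∑ i, b i (X i)} ⊆ Set.range (fun X : Fin n → Finset (Fin m) => ∑ i, b i (X i)) := by
    rintro t ⟨X, -, -, rfl⟩
    exact ⟨X, rfl⟩
  exact (Set.finite_range _).subset this

lemma W_set_nonempty (b : Fin n → Finset (Fin m) → ℝ) (S : Finset (Fin m)) :
    {t : ℝ | ∃ X : Fin n → Finset (Fin m),
      (∀ i j : Fin n, i ≠ j → Disjoint (X i) (X j)) ∧ (∀ i, X i ⊆ S) ∧
      t = ∑ i, b i (X i)}.Nonempty := by
  refine ⟨∑ i, b i ((fun _ => (∅ : Finset (Fin m))) i), (fun _ => ∅), ?_, ?_, rfl⟩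
  · intro i j _; simp
  · intro i; simp

lemma le_W {b : Fin n → Finset (Fin m) → ℝ} {S : Finset (Fin m)}
    {X : Fin n → Finset (Fin m)}
    (h1 : ∀ i j : Fin n, i ≠ j → Disjoint (X i) (X j)) (h2 : ∀ i, X i ⊆ S) :
    ∑ i, b i (X i) ≤ W b S :=
  le_csSup (W_set_finite b S).bddAbove ⟨X, h1, h2, rfl⟩

lemma W_le {b : Fin n → Finset (Fin m) → ℝ} {S : Finset (Fin m)} {c : ℝ}
    (h : ∀ X : Fin n → Finset (Fin m),
      (∀ i j : Fin n, i ≠ j → Disjoint (X i) (X j)) → (∀ i, X i ⊆ S) →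
      ∑ i, b i (X i) ≤ c) :
    W b S ≤ c := by
  refine csSup_le (W_set_nonempty b S) ?_
  rintro t ⟨X, h1, h2, rfl⟩
  exact h X h1 h2

lemma exists_W (b : Fin n → Finset (Fin m) → ℝ) (S : Finset (Fin m)) :
    ∃ X : Fin n → Finset (Fin m),
      (∀ i j : Fin n, i ≠ j → Disjoint (X i) (X j)) ∧ (∀ i, X i ⊆ S) ∧
      W b S = ∑ i, b i (X i) := by
  have h := (W_set_nonempty b S).csSup_mem (W_set_finite b S)
  obtain ⟨X, h1, h2, h3⟩ := h
  exact ⟨X, h1, h2, h3⟩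

lemma Wminus_set_finite (b : Fin n → Finset (Fin m) → ℝ) (i : Fin n) (S : Finset (Fin m)) :
    {t : ℝ | ∃ X : Fin n → Finset (Fin m),
      (∀ k l : Fin n, k ≠ l → Disjoint (X k) (X l)) ∧ (∀ k, X k ⊆ S) ∧
      t = ∑ k ∈ Finset.univ.erase i, b k (X k)}.Finite := by
  have : {t : ℝ | ∃ X : Fin n → Finset (Fin m),
      (∀ k l : Fin n, k ≠ l → Disjoint (X k) (X l)) ∧ (∀ k, X k ⊆ S) ∧
      t = ∑ k ∈ Finset.univ.erase i, b k (X k)} ⊆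
      Set.range (fun X : Fin n → Finset (Fin m) => ∑ k ∈ Finset.univ.erase i, b k (X k)) := by
    rintro t ⟨X, -, -, rfl⟩
    exact ⟨X, rfl⟩
  exact (Set.finite_range _).subset this

lemma Wminus_set_nonempty (b : Fin n → Finset (Fin m) → ℝ) (i : Fin n) (S : Finset (Fin m)) :
    {t : ℝ | ∃ X : Fin n → Finset (Fin m),
      (∀ k l : Fin n, k ≠ l → Disjoint (X k) (X l)) ∧ (∀ k, X k ⊆ S) ∧
      t = ∑ k ∈ Finset.univ.erase i, b k (X k)}.Nonempty := by
  refine ⟨∑ k ∈ Finset.univ.erase i, b k ((fun _ => (∅ : Finset (Fin m))) k),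
    (fun _ => ∅), ?_, ?_, rfl⟩
  · intro k l _; simp
  · intro k; simp

lemma le_Wminus {b : Fin n → Finset (Fin m) → ℝ} {i : Fin n} {S : Finset (Fin m)}
    {X : Fin n → Finset (Fin m)}
    (h1 : ∀ k l : Fin n, k ≠ l → Disjoint (X k) (X l)) (h2 : ∀ k, X k ⊆ S) :
    ∑ k ∈ Finset.univ.erase i, b k (X k) ≤ Wminus b i S :=
  le_csSup (Wminus_set_finite b i S).bddAbove ⟨X, h1, h2, rfl⟩

lemma Wminus_le {b : Fin n → Finset (Fin m) → ℝ} {i : Fin n} {S : Finset (Fin m)} {c : ℝ}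
    (h : ∀ X : Fin n → Finset (Fin m),
      (∀ k l : Fin n, k ≠ l → Disjoint (X k) (X l)) → (∀ k, X k ⊆ S) →
      ∑ k ∈ Finset.univ.erase i, b k (X k) ≤ c) :
    Wminus b i S ≤ c := by
  refine csSup_le (Wminus_set_nonempty b i S) ?_
  rintro t ⟨X, h1, h2, rfl⟩
  exact h X h1 h2

lemma exists_Wminus (b : Fin n → Finset (Fin m) → ℝ) (i : Fin n) (S : Finset (Fin m)) :
    ∃ X : Fin n → Finset (Fin m),
      (∀ k l : Fin n, k ≠ l → Disjoint (X k) (X l)) ∧ (∀ k, X k ⊆ S) ∧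
      Wminus b i S = ∑ k ∈ Finset.univ.erase i, b k (X k) := by
  have h := (Wminus_set_nonempty b i S).csSup_mem (Wminus_set_finite b i S)
  obtain ⟨X, h1, h2, h3⟩ := h
  exact ⟨X, h1, h2, h3⟩

lemma Wminus_nonneg {b : Fin n → Finset (Fin m) → ℝ}
    (hb : ∀ k S, 0 ≤ b k S) (i : Fin n) (S : Finset (Fin m)) :
    0 ≤ Wminus b i S := by
  have h := le_Wminus (b := b) (i := i) (S := S) (X := fun _ => ∅)
    (by intro k l _; simp) (by intro k; simp)
  refine le_trans ?_ h
  exact Finset.sum_nonneg fun k _ => hb k ∅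

/-- `Wminus` does not depend on the bid of the omitted agent. -/
lemma Wminus_update (b : Fin n → Finset (Fin m) → ℝ) (i : Fin n)
    (w : Finset (Fin m) → ℝ) (S : Finset (Fin m)) :
    Wminus (Function.update b i w) i S = Wminus b i S := by
  unfold Wminus
  congr 1
  ext t
  constructor <;> rintro ⟨X, h1, h2, rfl⟩ <;> refine ⟨X, h1, h2, Finset.sum_congr rfl ?_⟩ <;>
    intro k hk <;> rw [Function.update_of_ne (Finset.ne_of_mem_erase hk)]

end plumbing

section valuations

variable {m : ℕ}

/-- An additive valuation. -/
def addval (w : Fin m → ℝ) : Finset (Fin m) → ℝ := fun S => ∑ j ∈ S, w j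

lemma isValuation_addval {w : Fin m → ℝ} (hw : ∀ j, 0 ≤ w j) : IsValuation (addval w) := by
  refine ⟨by simp [addval], ?_, ?_⟩
  · intro S T hST
    exact Finset.sum_le_sum_of_subset_of_nonneg hST (fun j _ _ => hw j)
  · intro S
    exact Finset.sum_nonneg fun j _ => hw j

lemma inDemand_addval_of {w r : Fin m → ℝ} {T : Finset (Fin m)}
    (h1 : ∀ j, r j < w j → j ∈ T) (h2 : ∀ j ∈ T, r j ≤ w j) :
    InDemand (addval w) r T := by
  intro R
  have hR : addval w R - ∑ j ∈ R, r j = ∑ j ∈ R, (w j - r j) := by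
    simp [addval, Finset.sum_sub_distrib]
  have hT : addval w T - ∑ j ∈ T, r j = ∑ j ∈ T, (w j - r j) := by
    simp [addval, Finset.sum_sub_distrib]
  rw [hR, hT]
  have e1 : ∑ j ∈ R ∩ T, (w j - r j) + ∑ j ∈ R \ T, (w j - r j) = ∑ j ∈ R, (w j - r j) :=
    Finset.sum_inter_add_sum_sdiff R T _
  have e2 : ∑ j ∈ R \ T, (w j - r j) ≤ 0 := by
    refine Finset.sum_nonpos fun j hj => ?_
    have hjT : j ∉ T := (Finset.mem_sdiff.1 hj).2
    have : ¬ r j < w j := fun hc => hjT (h1 j hc)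
    linarith [not_lt.1 this]
  have e3 : ∑ j ∈ R ∩ T, (w j - r j) ≤ ∑ j ∈ T, (w j - r j) := by
    refine Finset.sum_le_sum_of_subset_of_nonneg (Finset.inter_subset_right) ?_
    intro j hj _
    linarith [h2 j hj]
  linarith

lemma inDemand_mem_price_le {v : Finset (Fin m) → ℝ} {r : Fin m → ℝ} {S : Finset (Fin m)}
    (hS : InDemand v r S) {j : Fin m} (hj : j ∈ S) : r j ≤ v S - v (S.erase j) := by
  have h := hS (S.erase j)
  have hsum : ∑ l ∈ S.erase j, r l + r j = ∑ l ∈ S, r l := Finset.sum_erase_add S r hj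
  linarith

lemma isGS_addval {w : Fin m → ℝ} (hw : ∀ j, 0 ≤ w j) : IsGS (addval w) := by
  refine ⟨isValuation_addval hw, ?_⟩
  intro p q hpq S hS
  refine ⟨Finset.univ.filter (fun j => q j < w j ∨ (j ∈ S ∧ p j = q j)), ?_, ?_⟩
  · refine inDemand_addval_of ?_ ?_
    · intro j hj
      exact Finset.mem_filter.2 ⟨Finset.mem_univ j, Or.inl hj⟩
    · intro j hj
      rcases (Finset.mem_filter.1 hj).2 with h | ⟨hjS, hpe⟩
      · exact le_of_lt h
      · have := inDemand_mem_price_le hS hjS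
        have hwv : p j ≤ w j := by
          have h2 := hS (S.erase j)
          have hsum : ∑ l ∈ S.erase j, p l + p j = ∑ l ∈ S, p l := Finset.sum_erase_add S p hjS
          have hmono : addval w (S.erase j) = addval w S - w j := by
            simp only [addval]
            have := Finset.sum_erase_add S w hjS
            linarith
          rw [hmono] at h2
          linarith
        linarith [hpe ▸ hwv]
  · intro j hjS hpe
    exact Finset.mem_filter.2 ⟨Finset.mem_univ j, Or.inr ⟨hjS, hpe⟩⟩

lemma exists_inDemand (v : Finset (Fin m) → ℝ) (p : Fin m → ℝ) :
    ∃ S : Finset (Fin m), InDemand v p S := by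
  obtain ⟨S, -, hS⟩ := Finset.exists_max_image (Finset.univ : Finset (Finset (Fin m)))
    (fun S => v S - ∑ j ∈ S, p j) ⟨∅, Finset.mem_univ _⟩
  exact ⟨S, fun T => hS T (Finset.mem_univ T)⟩

/-- If prices outside `B` are prohibitively high, demanded sets lie inside `B`. -/
lemma demand_subset_of_high {v : Finset (Fin m) → ℝ} (hval : IsValuation v)
    {r : Fin m → ℝ} {B : Finset (Fin m)}
    (hr : ∀ l, l ∉ B → v Finset.univ + 1 ≤ r l)
    {S : Finset (Fin m)} (hS : InDemand v r S) : S ⊆ B := by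
  intro h hhS
  by_contra hhB
  have h1 := hS (S.erase h)
  have hsum : ∑ l ∈ S.erase h, r l + r h = ∑ l ∈ S, r l := Finset.sum_erase_add S r hhS
  have h2 : v S ≤ v Finset.univ := hval.2.1 S Finset.univ (Finset.subset_univ S)
  have h3 : 0 ≤ v (S.erase h) := hval.2.2 _
  have h4 := hr h hhB
  linarith

/-- Gross substitutes implies the pairwise submodularity inequality. -/
lemma gs_submod_insert {v : Finset (Fin m) → ℝ} (hv : IsGS v) {A : Finset (Fin m)}
    {j₁ j₂ : Fin m} (h1 : j₁ ∉ A) (h2 : j₂ ∉ A) (hne : j₁ ≠ j₂) :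
    v (insert j₁ (insert j₂ A)) + v A ≤ v (insert j₁ A) + v (insert j₂ A) := by
  by_contra hcon
  push_neg at hcon
  have hβα : v (insert j₁ A) - v A < v (insert j₁ (insert j₂ A)) - v (insert j₂ A) := by
    linarith
  set α := v (insert j₁ (insert j₂ A)) - v (insert j₂ A) with hα
  set β := v (insert j₁ A) - v A with hβ
  set t := (α + β) / 2 with htdef
  have ht1 : β < t := by simp only [htdef]; linarith
  have ht2 : t < α := by simp only [htdef]; linarith
  have hmono := hv.1.2.1
  have hnn := hv.1.2.2
  set H := v Finset.univ + 1 with hH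
  have hj₁A : j₁ ∉ insert j₂ A := by
    simp only [Finset.mem_insert]
    push_neg
    exact ⟨hne, h1⟩
  set p : Fin m → ℝ := fun l => if l = j₁ then t else if l ∈ insert j₂ A then 0 else H with hp
  set q : Fin m → ℝ := fun l => if l = j₁ then t else if l ∈ A then 0 else H with hq
  have hHnn : (0:ℝ) ≤ H := by
    have := hnn Finset.univ; simp only [hH]; linarith
  have hpq : ∀ l, p l ≤ q l := by
    intro l
    simp only [hp, hq]
    by_cases hl1 : l = j₁
    · simp [hl1]
    · simp only [if_neg hl1]
      by_cases hl2 : l ∈ A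
      · simp [hl2, Finset.mem_insert_of_mem hl2]
      · by_cases hl3 : l ∈ insert j₂ A
        · simp [hl2, hl3, hHnn]
        · simp [hl2, hl3]
  obtain ⟨S, hSd⟩ := exists_inDemand v p
  have hSsub : S ⊆ insert j₁ (insert j₂ A) := by
    refine demand_subset_of_high hv.1 ?_ hSd
    intro l hl
    have hl1 : l ≠ j₁ := by rintro rfl; exact hl (Finset.mem_insert_self _ _)
    have hl2 : l ∉ insert j₂ A := fun hc => hl (Finset.mem_insert_of_mem hc)
    simp only [hp]
    rw [if_neg hl1, if_neg hl2]
  have hj₁S : j₁ ∈ S := by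
    by_contra hj₁S
    have hS2 : S ⊆ insert j₂ A := by
      intro l hlS
      rcases Finset.mem_insert.1 (hSsub hlS) with rfl | h
      · exact absurd hlS hj₁S
      · exact h
    have hpS : ∑ l ∈ S, p l = 0 := by
      refine Finset.sum_eq_zero fun l hl => ?_
      have hl1 : l ≠ j₁ := by rintro rfl; exact hj₁S hl
      simp only [hp]
      rw [if_neg hl1, if_pos (hS2 hl)]
    have hptop : ∑ l ∈ insert j₁ (insert j₂ A), p l = t := by
      rw [Finset.sum_insert hj₁A]
      have : ∑ l ∈ insert j₂ A, p l = 0 := by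
        refine Finset.sum_eq_zero fun l hl => ?_
        have hl1 : l ≠ j₁ := by rintro rfl; exact hj₁A hl
        simp only [hp]
        rw [if_neg hl1, if_pos hl]
      rw [this]
      simp [hp]
    have hd := hSd (insert j₁ (insert j₂ A))
    rw [hptop, hpS] at hd
    have hvS : v S ≤ v (insert j₂ A) := hmono _ _ hS2
    simp only [hα] at ht2
    linarith
  obtain ⟨T, hTd, hTcov⟩ := hv.2 p q hpq S hSd
  have hj₁T : j₁ ∈ T := by
    refine hTcov j₁ hj₁S ?_
    simp [hp, hq]
  have hTsub : T ⊆ insert j₁ A := by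
    refine demand_subset_of_high hv.1 ?_ hTd
    intro l hl
    have hl1 : l ≠ j₁ := by rintro rfl; exact hl (Finset.mem_insert_self _ _)
    have hl2 : l ∉ A := fun hc => hl (Finset.mem_insert_of_mem hc)
    simp [hq, hl1, hl2, hH]
  have hqA : ∑ l ∈ A, q l = 0 := by
    refine Finset.sum_eq_zero fun l hl => ?_
    have hl1 : l ≠ j₁ := by rintro rfl; exact h1 hl
    simp [hq, hl1, hl]
  have hqT : ∑ l ∈ T, q l = t := by
    have herase : T.erase j₁ ⊆ A := by
      intro l hl
      have hlT := Finset.mem_of_mem_erase hl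
      have hl1 := Finset.ne_of_mem_erase hl
      rcases Finset.mem_insert.1 (hTsub hlT) with rfl | h
      · exact absurd rfl hl1
      · exact h
    have h0 : ∑ l ∈ T.erase j₁, q l = 0 := by
      refine Finset.sum_eq_zero fun l hl => ?_
      have hl1 := Finset.ne_of_mem_erase hl
      simp [hq, hl1, herase hl]
    have hsum := Finset.sum_erase_add T q hj₁T
    rw [h0] at hsum
    have hqj : q j₁ = t := by simp [hq]
    rw [hqj] at hsum
    linarith
  have hd := hTd A
  rw [hqA, hqT] at hd
  have hvT : v T ≤ v (insert j₁ A) := hmono _ _ hTsub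
  simp only [hβ] at ht1
  linarith

/-- Marginal values of a GS valuation are monotone decreasing in the base set. -/
lemma gs_marg_mono {v : Finset (Fin m) → ℝ} (hv : IsGS v) {B' B : Finset (Fin m)}
    (hBB : B' ⊆ B) {j : Fin m} (hj : j ∉ B) :
    v (insert j B) - v B ≤ v (insert j B') - v B' := by
  have key : ∀ D : Finset (Fin m), j ∉ B' ∪ D →
      v (insert j (B' ∪ D)) - v (B' ∪ D) ≤ v (insert j B') - v B' := by
    intro D
    induction D using Finset.induction_on with
    | empty => intro _; simp
    | @insert a D haD ih =>
      intro hjmem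
      have hjD : j ∉ B' ∪ D := by
        intro hc
        exact hjmem (by
          rcases Finset.mem_union.1 hc with h | h
          · exact Finset.mem_union_left _ h
          · exact Finset.mem_union_right _ (Finset.mem_insert_of_mem h))
      by_cases haE : a ∈ B' ∪ D
      · have : B' ∪ insert a D = B' ∪ D := by
          rw [Finset.union_insert, Finset.insert_eq_self.2 haE]
        rw [this]
        exact ih hjD
      · have hja : j ≠ a := by
          rintro rfl
          exact hjmem (Finset.mem_union_right _ (Finset.mem_insert_self _ _))
        have hstep := gs_submod_insert hv (A := B' ∪ D) (j₁ := j) (j₂ := a) hjD haE hja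
        have : B' ∪ insert a D = insert a (B' ∪ D) := Finset.union_insert _ _ _
        rw [this]
        have := ih hjD
        linarith
  have hBeq : B' ∪ (B \ B') = B := Finset.union_sdiff_of_subset hBB
  have := key (B \ B') (by rw [hBeq]; exact hj)
  rwa [hBeq] at this

/-- Expansion bound: `v (B ∪ C) ≤ v B + ∑_{j ∈ C \ B} (v (insert j B) - v B)`. -/
lemma gs_union_expansion {v : Finset (Fin m) → ℝ} (hv : IsGS v) (B C : Finset (Fin m)) :
    v (B ∪ C) ≤ v B + ∑ j ∈ C \ B, (v (insert j B) - v B) := by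
  induction C using Finset.induction_on with
  | empty => simp
  | @insert a C haC ih =>
    by_cases haB : a ∈ B
    · have h1 : B ∪ insert a C = B ∪ C := by
        rw [Finset.union_insert, Finset.insert_eq_self.2 (Finset.mem_union_left _ haB)]
      have h2 : insert a C \ B = C \ B := by
        rw [Finset.insert_sdiff_of_mem _ haB]
      rw [h1, h2]
      exact ih
    · have h2 : insert a C \ B = insert a (C \ B) := Finset.insert_sdiff_of_notMem _ haB
      rw [Finset.union_insert, h2, Finset.sum_insert (by simp [haC])]
      by_cases haBC : a ∈ B ∪ C
      · have : insert a (B ∪ C) = B ∪ C := Finset.insert_eq_self.2 haBC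
        rw [this]
        have hnn : 0 ≤ v (insert a B) - v B := by
          have := hv.1.2.1 B (insert a B) (Finset.subset_insert _ _)
          linarith
        linarith
      · have hstep := gs_marg_mono hv (B' := B) (B := B ∪ C) Finset.subset_union_left haBC
        linarith

/-- Removal bound: the sum of top marginals is at most the loss from removing `D`. -/
lemma gs_removal {v : Finset (Fin m) → ℝ} (hv : IsGS v) {A D : Finset (Fin m)}
    (hD : D ⊆ A) :
    ∑ j ∈ D, (v A - v (A.erase j)) ≤ v A - v (A \ D) := by
  induction D using Finset.induction_on with
  | empty => simp
  | @insert a D haD ih =>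
    have haA : a ∈ A := (Finset.insert_subset_iff.1 hD).1
    have hDA : D ⊆ A := (Finset.insert_subset_iff.1 hD).2
    have hsum : ∑ j ∈ insert a D, (v A - v (A.erase j)) =
        (v A - v (A.erase a)) + ∑ j ∈ D, (v A - v (A.erase j)) :=
      Finset.sum_insert haD
    have hkey : v A - v (A.erase a) ≤ v (A \ D) - v ((A \ D).erase a) := by
      have haAD : a ∈ A \ D := Finset.mem_sdiff.2 ⟨haA, haD⟩
      have h1 : insert a (A.erase a) = A := Finset.insert_erase haA
      have h2 : insert a ((A \ D).erase a) = A \ D := Finset.insert_erase haAD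
      have hsub : (A \ D).erase a ⊆ A.erase a := by
        intro l hl
        have := Finset.mem_of_mem_erase hl
        exact Finset.mem_erase.2 ⟨Finset.ne_of_mem_erase hl, (Finset.mem_sdiff.1 this).1⟩
      have hna : a ∉ A.erase a := Finset.notMem_erase _ _
      have := gs_marg_mono hv hsub hna
      rw [h1, h2] at this
      linarith
    have hAeq : A \ insert a D = (A \ D).erase a := by
      ext l
      simp only [Finset.mem_sdiff, Finset.mem_erase, Finset.mem_insert]
      tauto
    rw [hsum, hAeq]
    have := ih hDA
    linarith

/-- A set is demanded at its own top-marginal prices (high prices outside). -/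
lemma gs_inDemand_topmarg {v : Finset (Fin m) → ℝ} (hv : IsGS v) (A : Finset (Fin m)) :
    InDemand v (fun j => if j ∈ A then v A - v (A.erase j) else v Finset.univ + 1) A := by
  set p : Fin m → ℝ := fun j => if j ∈ A then v A - v (A.erase j) else v Finset.univ + 1
    with hp
  have hmono := hv.1.2.1
  have hnn := hv.1.2.2
  -- first handle subsets of A
  have hsubcase : ∀ T ⊆ A, v T - ∑ j ∈ T, p j ≤ v A - ∑ j ∈ A, p j := by
    intro T hT
    have hsplit : ∑ j ∈ A, p j = ∑ j ∈ T, p j + ∑ j ∈ A \ T, p j := by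
      rw [← Finset.sum_sdiff hT]
      ring
    have hval : ∑ j ∈ A \ T, p j = ∑ j ∈ A \ T, (v A - v (A.erase j)) := by
      refine Finset.sum_congr rfl fun j hj => ?_
      simp only [hp]
      rw [if_pos (Finset.mem_sdiff.1 hj).1]
    have hrem := gs_removal hv (A := A) (D := A \ T) Finset.sdiff_subset
    have hATT : A \ (A \ T) = T := Finset.sdiff_sdiff_eq_self hT
    rw [hATT] at hrem
    rw [hsplit, hval]
    linarith
  intro T
  have hTA : T ∩ A ⊆ A := Finset.inter_subset_right
  have hstep : v T - ∑ j ∈ T, p j ≤ v (T ∩ A) - ∑ j ∈ T ∩ A, p j := by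
    by_cases hTsub : T ⊆ A
    · have : T ∩ A = T := Finset.inter_eq_left.2 hTsub
      rw [this]
    · obtain ⟨a, haT, haA⟩ := Finset.not_subset.1 hTsub
      have hsplit : ∑ j ∈ T, p j = ∑ j ∈ T ∩ A, p j + ∑ j ∈ T \ A, p j := by
        rw [← Finset.sum_inter_add_sum_sdiff T A p]
      have hbig : v Finset.univ + 1 ≤ ∑ j ∈ T \ A, p j := by
        have hmem : a ∈ T \ A := Finset.mem_sdiff.2 ⟨haT, haA⟩
        have hpa : p a = v Finset.univ + 1 := by simp only [hp]; rw [if_neg haA]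
        have hterm : ∀ j ∈ T \ A, 0 ≤ p j := by
          intro j hj
          simp only [hp]
          rw [if_neg (Finset.mem_sdiff.1 hj).2]
          have := hnn Finset.univ
          linarith
        calc v Finset.univ + 1 = p a := hpa.symm
          _ ≤ ∑ j ∈ T \ A, p j := Finset.single_le_sum hterm hmem
      have hvT : v T ≤ v Finset.univ := hmono _ _ (Finset.subset_univ _)
      have hvTA : 0 ≤ v (T ∩ A) := hnn _
      rw [hsplit]
      have hpTA : (0:ℝ) ≤ ∑ j ∈ T ∩ A, p j := by
        refine Finset.sum_nonneg fun j hj => ?_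
        simp only [hp]
        rw [if_pos (Finset.mem_inter.1 hj).2]
        have := hmono (A.erase j) A (Finset.erase_subset _ _)
        linarith
      linarith
  exact le_trans hstep (hsubcase (T ∩ A) hTA)

end valuations

section mechanism

variable {n m : ℕ}

lemma sum_two_agent {gk : Finset (Fin m) → ℝ} {q : Fin m → ℝ} {k l₀ : Fin n}
    (hkl : l₀ ≠ k) (Z : Fin n → Finset (Fin m)) :
    ∑ l, (fun l => if l = k then gk else if l = l₀ then addval q else addval 0) l (Z l)
      = gk (Z k) + addval q (Z l₀) := by
  set c := fun l => if l = k then gk else if l = l₀ then addval q else addval 0 with hc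
  have hk : k ∈ Finset.univ := Finset.mem_univ k
  have h1 : ∑ l, c l (Z l) = c k (Z k) + ∑ l ∈ Finset.univ.erase k, c l (Z l) :=
    (Finset.add_sum_erase _ (fun l => c l (Z l)) hk).symm
  have hl₀ : l₀ ∈ Finset.univ.erase k := Finset.mem_erase.2 ⟨hkl, Finset.mem_univ _⟩
  have h2 : ∑ l ∈ Finset.univ.erase k, c l (Z l)
      = c l₀ (Z l₀) + ∑ l ∈ (Finset.univ.erase k).erase l₀, c l (Z l) :=
    (Finset.add_sum_erase _ (fun l => c l (Z l)) hl₀).symm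
  have h3 : ∑ l ∈ (Finset.univ.erase k).erase l₀, c l (Z l) = 0 := by
    refine Finset.sum_eq_zero fun l hl => ?_
    have hlk : l ≠ k := Finset.ne_of_mem_erase (Finset.mem_of_mem_erase hl)
    have hll : l ≠ l₀ := Finset.ne_of_mem_erase hl
    simp only [hc, if_neg hlk, if_neg hll, addval]
    simp
  have hck : c k = gk := by simp [hc]
  have hcl : c l₀ = addval q := by simp [hc, hkl]
  rw [h1, h2, h3, hck, hcl]
  ring

lemma Wminus_two_agent {gk : Finset (Fin m) → ℝ} {q : Fin m → ℝ} (hq : ∀ j, 0 ≤ q j)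
    {k l₀ : Fin n} (hkl : l₀ ≠ k) (G : Finset (Fin m)) :
    Wminus (fun l => if l = k then gk else if l = l₀ then addval q else addval 0) k G
      = ∑ j ∈ G, q j := by
  set c := fun l => if l = k then gk else if l = l₀ then addval q else addval 0 with hc
  have hl₀ : l₀ ∈ Finset.univ.erase k := Finset.mem_erase.2 ⟨hkl, Finset.mem_univ _⟩
  refine le_antisymm ?_ ?_
  · refine Wminus_le ?_
    intro X hX1 hX2
    have h2 : ∑ l ∈ Finset.univ.erase k, c l (X l)
        = c l₀ (X l₀) + ∑ l ∈ (Finset.univ.erase k).erase l₀, c l (X l) :=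
      (Finset.add_sum_erase _ (fun l => c l (X l)) hl₀).symm
    have h3 : ∑ l ∈ (Finset.univ.erase k).erase l₀, c l (X l) = 0 := by
      refine Finset.sum_eq_zero fun l hl => ?_
      have hlk : l ≠ k := Finset.ne_of_mem_erase (Finset.mem_of_mem_erase hl)
      have hll : l ≠ l₀ := Finset.ne_of_mem_erase hl
      simp only [hc, if_neg hlk, if_neg hll, addval]
      simp
    have hcl : c l₀ = addval q := by simp [hc, hkl]
    rw [h2, h3, hcl]
    have : addval q (X l₀) ≤ ∑ j ∈ G, q j :=
      Finset.sum_le_sum_of_subset_of_nonneg (hX2 l₀) (fun j _ _ => hq j)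
    linarith
  · have := le_Wminus (b := c) (i := k) (S := G)
      (X := fun l => if l = l₀ then G else ∅) ?_ ?_
    · refine le_trans (le_of_eq ?_) this
      have h2 : ∑ l ∈ Finset.univ.erase k, c l (if l = l₀ then G else ∅)
          = c l₀ G + ∑ l ∈ (Finset.univ.erase k).erase l₀,
              c l (if l = l₀ then G else (∅ : Finset (Fin m))) := by
        have := (Finset.add_sum_erase ((Finset.univ : Finset (Fin n)).erase k)
          (fun l => c l (if l = l₀ then G else ∅)) hl₀).symm
        simpa using this
      have h3 : ∑ l ∈ (Finset.univ.erase k).erase l₀,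
          c l (if l = l₀ then G else (∅ : Finset (Fin m))) = 0 := by
        refine Finset.sum_eq_zero fun l hl => ?_
        have hlk : l ≠ k := Finset.ne_of_mem_erase (Finset.mem_of_mem_erase hl)
        have hll : l ≠ l₀ := Finset.ne_of_mem_erase hl
        simp only [hc, if_neg hlk, if_neg hll, if_neg hll, addval]
        simp
      have hcl : c l₀ = addval q := by simp [hc, hkl]
      rw [h2, h3, hcl]
      simp [addval]
    · intro a b hab
      by_cases ha : a = l₀ <;> by_cases hb : b = l₀
      · exact absurd (ha.trans hb.symm) hab
      · simp [ha, hb]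
      · simp [ha, hb]
      · simp [ha, hb]
    · intro l
      by_cases hl : l = l₀ <;> simp [hl]

/-- Exposure implies that the price of any demanded set is at most `(1+γ)` times
its true value. -/
lemma demand_price_bound (M : Mechanism n m) (hM : AllocDisjoint M (GSvals m))
    (hVCG : IsVCG M (GSvals m)) {γ : ℝ} (hγ : 0 ≤ γ)
    {vk gk : Finset (Fin m) → ℝ} {k : Fin n} (hgk : IsGS gk) (hvk : IsGS vk)
    (hexpk : HasExposureFactor M (GSvals m) vk k gk γ)
    (hn : 2 ≤ n) {p : Fin m → ℝ} (hp : ∀ j, 0 ≤ p j) {T : Finset (Fin m)}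
    (hT : InDemand gk p T) :
    ∑ j ∈ T, p j ≤ (1 + γ) * vk T := by
  have h0n : 0 < n := by omega
  have h1n : 1 < n := by omega
  set i0 : Fin n := ⟨0, h0n⟩ with hi0
  set i1 : Fin n := ⟨1, h1n⟩ with hi1
  have hi01 : i0 ≠ i1 := by
    simp only [hi0, hi1, Fin.mk.injEq, ne_eq]
    omega
  set l₀ : Fin n := if k = i0 then i1 else i0 with hl₀def
  have hkl : l₀ ≠ k := by
    by_cases hk : k = i0
    · simp only [hl₀def, if_pos hk, hk]
      exact fun hc => hi01 hc.symm
    · simp only [hl₀def, if_neg hk]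
      exact fun hc => hk hc.symm
  have hgnn := hgk.1.2.2
  have hgmono := hgk.1.2.1
  have hvnn := hvk.1.2.2
  have hvmono := hvk.1.2.1
  have main : ∀ ε : ℝ, 0 < ε → ε < 1 → (1 - ε) * (∑ j ∈ T, p j) ≤ (1 + γ) * vk T := by
    intro ε hε0 hε1
    set q : Fin m → ℝ := fun j => if j ∈ T then (1 - ε) * p j else gk Finset.univ + 1 with hqdef
    have hqnn : ∀ j, 0 ≤ q j := by
      intro j
      simp only [hqdef]
      by_cases hj : j ∈ T
      · rw [if_pos hj]
        have := hp j
        nlinarith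
      · rw [if_neg hj]
        have := hgnn Finset.univ
        linarith
    set c : Fin n → Finset (Fin m) → ℝ :=
      fun l => if l = k then gk else if l = l₀ then addval q else addval 0 with hcdef
    have hc : InBidSpace (GSvals m) c := by
      intro l
      simp only [hcdef]
      by_cases hlk : l = k
      · rw [if_pos hlk]; exact hgk
      · rw [if_neg hlk]
        by_cases hll : l = l₀
        · rw [if_pos hll]; exact isGS_addval hqnn
        · rw [if_neg hll]; exact isGS_addval (fun _ => le_refl (0:ℝ))
    set A := M.alloc c k with hAdef
    have halloc := (hVCG.1 c hc)
    have hsumalloc : ∑ l, c l (M.alloc c l) = gk A + addval q (M.alloc c l₀) :=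
      sum_two_agent hkl (M.alloc c)
    have hdisj : Disjoint A (M.alloc c l₀) := hM c hc k l₀ (Ne.symm hkl)
    have hsubl₀ : M.alloc c l₀ ⊆ Finset.univ \ A := by
      refine Finset.subset_sdiff.2 ⟨Finset.subset_univ _, hdisj.symm⟩
    have hup : addval q (M.alloc c l₀) ≤ ∑ j ∈ Finset.univ \ A, q j :=
      Finset.sum_le_sum_of_subset_of_nonneg hsubl₀ (fun j _ _ => hqnn j)
    have hlow : ∀ T' : Finset (Fin m), gk T' + ∑ j ∈ Finset.univ \ T', q j ≤ W c Finset.univ := by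
      intro T'
      have hZ := sum_two_agent (gk := gk) (q := q) hkl
        (fun l => if l = k then T' else if l = l₀ then Finset.univ \ T' else ∅)
      have hwit := le_W (b := c) (S := Finset.univ)
        (X := fun l => if l = k then T' else if l = l₀ then Finset.univ \ T' else ∅) ?_ ?_
      · rw [hZ] at hwit
        have e1 : (if k = k then T' else if k = l₀ then Finset.univ \ T' else ∅) = T' := by
          simp
        have e2 : (if l₀ = k then T' else if l₀ = l₀ then Finset.univ \ T' else ∅)
            = Finset.univ \ T' := by simp [hkl]
        rw [e1, e2] at hwit
        exact hwit
      · intro a b hab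
        by_cases ha1 : a = k <;> by_cases hb1 : b = k
        · exact absurd (ha1.trans hb1.symm) hab
        · by_cases hb2 : b = l₀
          · simp only [if_pos ha1, if_neg hb1, if_pos hb2]
            exact Finset.disjoint_sdiff
          · simp [ha1, hb1, hb2]
        · by_cases ha2 : a = l₀
          · simp only [if_neg ha1, if_pos ha2, if_pos hb1]
            exact Finset.disjoint_sdiff.symm
          · simp [ha1, hb1, ha2]
        · by_cases ha2 : a = l₀ <;> by_cases hb2 : b = l₀
          · exact absurd (ha2.trans hb2.symm) hab
          · simp [ha1, hb1, ha2, hb2]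
          · simp [ha1, hb1, ha2, hb2]
          · simp [ha1, hb1, ha2, hb2]
      · intro l
        by_cases hl1 : l = k <;> by_cases hl2 : l = l₀ <;>
          simp [hl1, hl2, Finset.subset_univ]
    have hq_univ : ∀ R : Finset (Fin m),
        ∑ j ∈ Finset.univ \ R, q j = ∑ j ∈ (Finset.univ : Finset (Fin m)), q j - ∑ j ∈ R, q j := by
      intro R
      have := Finset.sum_sdiff (f := q) (Finset.subset_univ R)
      linarith
    have hdemA : InDemand gk q A := by
      intro T'
      have h1 := hlow T'
      have h2 : W c Finset.univ ≤ gk A + ∑ j ∈ Finset.univ \ A, q j := by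
        rw [← halloc, hsumalloc]
        linarith
      rw [hq_univ T', hq_univ A] at *
      linarith
    have hAT : A ⊆ T := by
      intro j hjA
      by_contra hjT
      have h1 := hdemA (A.erase j)
      have hsum : ∑ l ∈ A.erase j, q l + q j = ∑ l ∈ A, q l := Finset.sum_erase_add A q hjA
      have hqj : q j = gk Finset.univ + 1 := by simp only [hqdef]; rw [if_neg hjT]
      have h2 : gk A ≤ gk Finset.univ := hgmono _ _ (Finset.subset_univ _)
      have h3 : 0 ≤ gk (A.erase j) := hgnn _
      linarith
    have hqA : ∑ j ∈ A, q j = (1 - ε) * ∑ j ∈ A, p j := by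
      rw [Finset.mul_sum]
      refine Finset.sum_congr rfl fun j hj => ?_
      simp only [hqdef]
      rw [if_pos (hAT hj)]
    have hqT : ∑ j ∈ T, q j = (1 - ε) * ∑ j ∈ T, p j := by
      rw [Finset.mul_sum]
      refine Finset.sum_congr rfl fun j hj => ?_
      simp only [hqdef]
      rw [if_pos hj]
    have hpAT : ∑ j ∈ T, p j ≤ ∑ j ∈ A, p j := by
      have h1 := hdemA T
      have h2 := hT A
      rw [hqA, hqT] at h1
      nlinarith
    have hpay := hVCG.2 c hc k
    have hWm1 : Wminus c k Finset.univ = ∑ j ∈ (Finset.univ : Finset (Fin m)), q j :=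
      Wminus_two_agent hqnn hkl _
    have hWm2 : Wminus c k (Finset.univ \ A) = ∑ j ∈ Finset.univ \ A, q j :=
      Wminus_two_agent hqnn hkl _
    have hpayval : M.pay c k = ∑ j ∈ A, q j := by
      rw [hpay, hWm1, hWm2, hq_univ A]
      ring
    have hexp1 : M.pay c k ≤ (1 + γ) * vk A := by
      refine hexpk c hc ?_
      simp [hcdef]
    have hvAT : vk A ≤ vk T := hvmono _ _ hAT
    rw [hpayval, hqA] at hexp1
    have h1γ : (0:ℝ) ≤ 1 + γ := by linarith
    calc (1 - ε) * ∑ j ∈ T, p j ≤ (1 - ε) * ∑ j ∈ A, p j := by nlinarith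
      _ ≤ (1 + γ) * vk A := hexp1
      _ ≤ (1 + γ) * vk T := by nlinarith
  by_contra hgt
  push_neg at hgt
  set P := ∑ j ∈ T, p j with hP
  set c₀ := (1 + γ) * vk T with hc₀
  have hc₀nn : 0 ≤ c₀ := by
    have := hvnn T
    simp only [hc₀]
    nlinarith
  have hP0 : 0 < P := lt_of_le_of_lt hc₀nn hgt
  set ε := (P - c₀) / (2 * P) with hεdef
  have hε0 : 0 < ε := by
    apply div_pos <;> linarith
  have hε1 : ε < 1 := by
    rw [hεdef, div_lt_one (by linarith)]
    linarith
  have := main ε hε0 hε1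
  have heq : (1 - ε) * P = (P + c₀) / 2 := by
    rw [hεdef]
    field_simp
    ring
  rw [heq] at this
  linarith

/-- Nash equilibrium implies that no bundle is worth more than its externality plus
the equilibrium utility. -/
lemma nash_bound (M : Mechanism n m) (hM : AllocDisjoint M (GSvals m))
    (hVCG : IsVCG M (GSvals m)) {v b : Fin n → Finset (Fin m) → ℝ}
    (hNash : IsNash M (GSvals m) v b) (i : Fin n) (hvi : IsGS (v i))
    (S : Finset (Fin m)) :
    v i S - (Wminus b i Finset.univ - Wminus b i (Finset.univ \ S))
      ≤ v i (M.alloc b i) - M.pay b i := by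
  have hb := hNash.1
  have hbnn : ∀ k R, 0 ≤ b k R := fun k R => (hb k).1.2.2 R
  have hvmono := hvi.1.2.1
  set Wm := Wminus b i Finset.univ with hWm
  have hWmnn : 0 ≤ Wm := Wminus_nonneg hbnn i _
  set H := Wm + 1 with hHdef
  have hH0 : (0:ℝ) < H := by linarith
  set w : Fin m → ℝ := fun j => if j ∈ S then H else 0 with hwdef
  have hwnn : ∀ j, 0 ≤ w j := by
    intro j
    simp only [hwdef]
    by_cases hj : j ∈ S <;> simp [hj] <;> linarith
  set bi' := addval w with hbi'
  have hbi'GS : bi' ∈ GSvals m := isGS_addval hwnn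
  set B' := Function.update b i bi' with hB'def
  have hB' : InBidSpace (GSvals m) B' := by
    intro l
    by_cases hl : l = i
    · rw [hB'def, hl, Function.update_self]; exact hbi'GS
    · rw [hB'def, Function.update_of_ne hl]; exact hb l
  have hNashi := hNash.2 i bi' hbi'GS
  rw [← hB'def] at hNashi
  set A := M.alloc B' i with hAdef
  -- value of the additive bid on any set
  have haddcard : ∀ R : Finset (Fin m), addval w R = H * (R ∩ S).card := by
    intro R
    simp only [addval, hwdef]
    rw [Finset.sum_ite_mem]
    rw [Finset.sum_const]
    simp [mul_comm]
  -- a lower bound on the declared welfare at the deviation profile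
  obtain ⟨Y, hY1, hY2, hY3⟩ := exists_Wminus b i (Finset.univ \ S)
  have hlow : H * S.card + Wminus b i (Finset.univ \ S) ≤ W B' Finset.univ := by
    have hwit := le_W (b := B') (S := Finset.univ)
      (X := fun l => if l = i then S else Y l) ?_ ?_
    · refine le_trans (le_of_eq ?_) hwit
      have hsplit : ∑ l, B' l (if l = i then S else Y l)
          = B' i S + ∑ l ∈ Finset.univ.erase i, B' l (if l = i then S else Y l) := by
        have := (Finset.add_sum_erase (Finset.univ : Finset (Fin n))
          (fun l => B' l (if l = i then S else Y l)) (Finset.mem_univ i)).symm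
        simpa using this
      rw [hsplit]
      have h1 : B' i S = H * S.card := by
        rw [hB'def, Function.update_self, hbi', haddcard]
        have : S ∩ S = S := Finset.inter_self S
        rw [this]
      have h2 : ∑ l ∈ Finset.univ.erase i, B' l (if l = i then S else Y l)
          = ∑ l ∈ Finset.univ.erase i, b l (Y l) := by
        refine Finset.sum_congr rfl fun l hl => ?_
        have hli := Finset.ne_of_mem_erase hl
        rw [hB'def, Function.update_of_ne hli, if_neg hli]
      rw [h1, h2, ← hY3]
    · intro a c hac
      by_cases ha : a = i <;> by_cases hc : c = i
      · exact absurd (ha.trans hc.symm) hac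
      · simp only [if_pos ha, if_neg hc]
        exact Finset.disjoint_left.2 fun x hxS hxY =>
          (Finset.mem_sdiff.1 (hY2 c hxY)).2 hxS
      · simp only [if_neg ha, if_pos hc]
        have hsub := hY2 a
        exact Finset.disjoint_left.2 fun x hx hxS =>
          (Finset.mem_sdiff.1 (hsub hx)).2 hxS
      · simp only [if_neg ha, if_neg hc]
        exact hY1 a c hac
    · intro l
      by_cases hl : l = i <;> simp [hl]
  have halloc := hVCG.1 B' hB'
  have hsplit2 : ∑ l, B' l (M.alloc B' l)
      = addval w A + ∑ l ∈ Finset.univ.erase i, b l (M.alloc B' l) := by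
    have := (Finset.add_sum_erase (Finset.univ : Finset (Fin n))
      (fun l => B' l (M.alloc B' l)) (Finset.mem_univ i)).symm
    rw [this]
    have h1 : B' i (M.alloc B' i) = addval w A := by
      rw [hB'def, Function.update_self, hbi', hAdef]
    have h2 : ∑ l ∈ Finset.univ.erase i, B' l (M.alloc B' l)
        = ∑ l ∈ Finset.univ.erase i, b l (M.alloc B' l) := by
      refine Finset.sum_congr rfl fun l hl => ?_
      rw [hB'def, Function.update_of_ne (Finset.ne_of_mem_erase hl)]
    rw [h1, h2]
  set SB := ∑ l ∈ Finset.univ.erase i, b l (M.alloc B' l) with hSB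
  have hSBle : SB ≤ Wm := by
    rw [hWm]
    exact le_Wminus (fun a c hac => hM B' hB' a c hac) (fun l => Finset.subset_univ _)
  -- the chain inequality
  have hchain : H * S.card + Wminus b i (Finset.univ \ S) ≤ H * (A ∩ S).card + SB := by
    calc H * S.card + Wminus b i (Finset.univ \ S) ≤ W B' Finset.univ := hlow
      _ = ∑ l, B' l (M.alloc B' l) := halloc.symm
      _ = addval w A + SB := by rw [hsplit2]
      _ = H * (A ∩ S).card + SB := by rw [haddcard]
  have hcardle : (A ∩ S).card ≤ S.card := Finset.card_le_card Finset.inter_subset_right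
  have hScard : S.card ≤ (A ∩ S).card := by
    by_contra hlt
    push_neg at hlt
    have h1 : ((A ∩ S).card : ℝ) + 1 ≤ (S.card : ℝ) := by
      have : (A ∩ S).card + 1 ≤ S.card := hlt
      exact_mod_cast this
    have h2 : 0 ≤ Wminus b i (Finset.univ \ S) := Wminus_nonneg hbnn i _
    nlinarith
  have hSsubA : S ⊆ A := by
    have heq : A ∩ S = S :=
      Finset.eq_of_subset_of_card_le Finset.inter_subset_right hScard
    intro x hx
    have : x ∈ A ∩ S := heq.symm ▸ hx
    exact (Finset.mem_inter.1 this).1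
  have hcardeq : ((A ∩ S).card : ℝ) = (S.card : ℝ) := by
    have : (A ∩ S).card = S.card := le_antisymm hcardle hScard
    exact_mod_cast this
  have hSBge : Wminus b i (Finset.univ \ S) ≤ SB := by nlinarith
  -- payment bound at the deviation profile
  have hpay := hVCG.2 B' hB' i
  have hWmB' : Wminus B' i Finset.univ = Wm := by
    rw [hB'def, Wminus_update, hWm]
  have hWmB'A : Wminus b i (Finset.univ \ S) ≤ Wminus B' i (Finset.univ \ A) := by
    rw [hB'def, Wminus_update]
    refine le_trans hSBge ?_
    refine le_Wminus (X := fun l => if l = i then ∅ else M.alloc B' l) ?_ ?_ |>.trans_eq' ?_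
    · intro a c hac
      by_cases ha : a = i <;> by_cases hc : c = i
      · exact absurd (ha.trans hc.symm) hac
      · simp [ha]
      · simp [hc]
      · simp only [if_neg ha, if_neg hc]
        exact hM B' hB' a c hac
    · intro l
      by_cases hl : l = i
      · simp [hl]
      · simp only [if_neg hl]
        refine Finset.subset_sdiff.2 ⟨Finset.subset_univ _, ?_⟩
        exact (hM B' hB' i l (fun hc => hl hc.symm)).symm
    · refine Finset.sum_congr rfl fun l hl => ?_
      rw [if_neg (Finset.ne_of_mem_erase hl)]
  have hpayle : M.pay B' i ≤ Wm - Wminus b i (Finset.univ \ S) := by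
    rw [hpay, hWmB']
    linarith
  -- conclude via the Nash property
  have hutil : v i S - (Wm - Wminus b i (Finset.univ \ S)) ≤ util M (v i) i B' := by
    have hvS : v i S ≤ v i A := hvmono _ _ hSsubA
    simp only [util]
    rw [← hAdef]
    linarith
  have := le_trans hutil hNashi
  simpa [util] using this

end mechanism

end PoA

/-- PoA_γ ≤ 2 + γ for the VCG mechanism with GS valuations and bids. -/
theorem stmt4 {n m : ℕ} (M : Mechanism n m)
    (hM : AllocDisjoint M (GSvals m)) (hVCG : IsVCG M (GSvals m))
    (γ : ℝ) (hγ : 0 ≤ γ)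
    (v : Fin n → Finset (Fin m) → ℝ) (hv : ∀ i, IsGS (v i))
    (b : Fin n → Finset (Fin m) → ℝ) (hNash : IsNash M (GSvals m) v b)
    (hexp : ∀ i : Fin n, HasExposureFactor M (GSvals m) (v i) i (b i) γ) :
    OPT v ≤ (2 + γ) * ∑ i, v i (M.alloc b i) := by
  classical
  have hb := hNash.1
  have hbnn : ∀ k R, 0 ≤ b k R := fun k R => (hb k).1.2.2 R
  have hW := hVCG.1 b hb
  have hpayf := hVCG.2 b hb
  obtain ⟨Xs, hXs1, hXs2, hXs3⟩ := PoA.exists_W v Finset.univ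
  -- the equilibrium allocation
  set Xi : Fin n → Finset (Fin m) := M.alloc b with hXidef
  have hXidisj : ∀ k l : Fin n, k ≠ l → Disjoint (Xi k) (Xi l) := fun k l h => hM b hb k l h
  -- (1) residual welfare after removing agent i and its allocation
  have hWmXi : ∀ i : Fin n, Wminus b i (Finset.univ \ Xi i)
      = ∑ l ∈ Finset.univ.erase i, b l (Xi l) := by
    intro i
    refine le_antisymm ?_ ?_
    · refine PoA.Wminus_le ?_
      intro Y hY1 hY2
      have hwit := PoA.le_W (b := b) (S := Finset.univ)
        (X := fun l => if l = i then Xi i else Y l) ?_ ?_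
      · rw [← hW] at hwit
        have hsplit : ∑ l, b l (if l = i then Xi i else Y l)
            = b i (Xi i) + ∑ l ∈ Finset.univ.erase i, b l (Y l) := by
          have h0 := (Finset.add_sum_erase (Finset.univ : Finset (Fin n))
            (fun l => b l (if l = i then Xi i else Y l)) (Finset.mem_univ i)).symm
          rw [h0]
          congr 1
          · rw [if_pos rfl]
          · refine Finset.sum_congr rfl fun l hl => ?_
            rw [if_neg (Finset.ne_of_mem_erase hl)]
        have hsplit2 : ∑ l, b l (Xi l)
            = b i (Xi i) + ∑ l ∈ Finset.univ.erase i, b l (Xi l) := by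
          exact (Finset.add_sum_erase (Finset.univ : Finset (Fin n))
            (fun l => b l (Xi l)) (Finset.mem_univ i)).symm
        rw [hsplit] at hwit
        rw [hsplit2] at hwit
        linarith
      · intro a c hac
        by_cases ha : a = i <;> by_cases hc : c = i
        · exact absurd (ha.trans hc.symm) hac
        · simp only [if_pos ha, if_neg hc]
          exact Finset.disjoint_left.2 fun x hx hxY =>
            (Finset.mem_sdiff.1 (hY2 c hxY)).2 hx
        · simp only [if_neg ha, if_pos hc]
          exact Finset.disjoint_left.2 fun x hxY hx =>
            (Finset.mem_sdiff.1 (hY2 a hxY)).2 hx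
        · simp only [if_neg ha, if_neg hc]
          exact hY1 a c hac
      · intro l
        by_cases hl : l = i <;> simp [hl, Finset.subset_univ]
    · refine PoA.le_Wminus (X := fun l => if l = i then ∅ else Xi l) ?_ ?_ |>.trans_eq' ?_
      · intro a c hac
        by_cases ha : a = i <;> by_cases hc : c = i
        · exact absurd (ha.trans hc.symm) hac
        · simp [ha]
        · simp [hc]
        · simp only [if_neg ha, if_neg hc]
          exact hXidisj a c hac
      · intro l
        by_cases hl : l = i
        · simp [hl]
        · simp only [if_neg hl]
          refine Finset.subset_sdiff.2 ⟨Finset.subset_univ _, ?_⟩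
          exact (hXidisj i l (fun hc => hl hc.symm)).symm
      · refine Finset.sum_congr rfl fun l hl => ?_
        rw [if_neg (Finset.ne_of_mem_erase hl)]
  -- (3) marginal bound from the Nash property
  have hmarg : ∀ i : Fin n, ∀ j ∉ Xi i,
      v i (insert j (Xi i)) - v i (Xi i)
        ≤ Wminus b i (Finset.univ \ Xi i) - Wminus b i ((Finset.univ \ Xi i).erase j) := by
    intro i j hj
    have h1 := PoA.nash_bound M hM hVCG hNash i (hv i) (insert j (Xi i))
    have hgr : Finset.univ \ insert j (Xi i) = (Finset.univ \ Xi i).erase j := by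
      ext x
      simp only [Finset.mem_sdiff, Finset.mem_erase, Finset.mem_insert, Finset.mem_univ,
        true_and]
      tauto
    rw [hgr] at h1
    have h2 := hpayf i
    rw [h2] at h1
    rw [← hXidef] at h1
    linarith
  -- (4) per-agent bound on the optimal bundle
  have hperi : ∀ i : Fin n, v i (Xs i) ≤ v i (Xi i)
      + ∑ j ∈ Xs i \ Xi i, (Wminus b i (Finset.univ \ Xi i)
          - Wminus b i ((Finset.univ \ Xi i).erase j)) := by
    intro i
    have h1 : v i (Xs i) ≤ v i (Xi i ∪ Xs i) :=
      (hv i).1.2.1 _ _ Finset.subset_union_right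
    have h2 := PoA.gs_union_expansion (hv i) (Xi i) (Xs i)
    have h3 : ∑ j ∈ Xs i \ Xi i, (v i (insert j (Xi i)) - v i (Xi i))
        ≤ ∑ j ∈ Xs i \ Xi i, (Wminus b i (Finset.univ \ Xi i)
            - Wminus b i ((Finset.univ \ Xi i).erase j)) := by
      refine Finset.sum_le_sum fun j hj => ?_
      exact hmarg i j (Finset.mem_sdiff.1 hj).2
    linarith
  -- (5) the item charges
  set charge : Fin m → ℝ :=
    fun j => ∑ k, (if j ∈ Xi k then b k (Xi k) - b k ((Xi k).erase j) else 0) with hchargedef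
  have htopnn : ∀ k : Fin n, ∀ j : Fin m, 0 ≤ b k (Xi k) - b k ((Xi k).erase j) := by
    intro k j
    have := (hb k).1.2.1 ((Xi k).erase j) (Xi k) (Finset.erase_subset _ _)
    linarith
  have hchargenn : ∀ j, 0 ≤ charge j := by
    intro j
    refine Finset.sum_nonneg fun k _ => ?_
    by_cases hjk : j ∈ Xi k
    · rw [if_pos hjk]; exact htopnn k j
    · rw [if_neg hjk]
  -- (6) the charges dominate the single-item externalities
  have hqcharge : ∀ i : Fin n, ∀ j ∈ Xs i \ Xi i,
      Wminus b i (Finset.univ \ Xi i) - Wminus b i ((Finset.univ \ Xi i).erase j)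
        ≤ charge j := by
    intro i j hj
    have hjXi : j ∉ Xi i := (Finset.mem_sdiff.1 hj).2
    have hkey : ∀ k₀ : Fin n, k₀ ≠ i →
        ∑ l ∈ Finset.univ.erase i, b l ((Xi l).erase j)
          ≤ Wminus b i ((Finset.univ \ Xi i).erase j) := by
      intro k₀ hk₀
      refine PoA.le_Wminus (X := fun l => if l = i then ∅ else (Xi l).erase j) ?_ ?_
        |>.trans_eq' ?_
      · intro a c hac
        by_cases ha : a = i <;> by_cases hc : c = i
        · exact absurd (ha.trans hc.symm) hac
        · simp [ha]
        · simp [hc]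
        · simp only [if_neg ha, if_neg hc]
          exact (hXidisj a c hac).mono (Finset.erase_subset _ _) (Finset.erase_subset _ _)
      · intro l
        by_cases hl : l = i
        · simp [hl]
        · simp only [if_neg hl]
          intro x hx
          have hx1 := Finset.mem_of_mem_erase hx
          have hx2 := Finset.ne_of_mem_erase hx
          refine Finset.mem_erase.2 ⟨hx2, Finset.mem_sdiff.2 ⟨Finset.mem_univ _, ?_⟩⟩
          exact fun hcon => Finset.disjoint_left.1 (hXidisj i l (fun hc => hl hc.symm)) hcon hx1
      · refine Finset.sum_congr rfl fun l hl => ?_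
        rw [if_neg (Finset.ne_of_mem_erase hl)]
    by_cases hex : ∃ k, j ∈ Xi k
    · obtain ⟨k₀, hk₀mem⟩ := hex
      have hk₀i : k₀ ≠ i := fun hc => hjXi (hc ▸ hk₀mem)
      have hjother : ∀ l : Fin n, l ≠ k₀ → j ∉ Xi l := by
        intro l hl hcon
        exact Finset.disjoint_left.1 (hXidisj k₀ l (fun hc => hl hc.symm)) hk₀mem hcon
      have hsum1 : ∑ l ∈ Finset.univ.erase i, b l ((Xi l).erase j)
          = ∑ l ∈ Finset.univ.erase i, b l (Xi l)
            - (b k₀ (Xi k₀) - b k₀ ((Xi k₀).erase j)) := by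
        have hk₀er : k₀ ∈ Finset.univ.erase i := Finset.mem_erase.2 ⟨hk₀i, Finset.mem_univ _⟩
        have e1 := (Finset.add_sum_erase (Finset.univ.erase i)
          (fun l => b l ((Xi l).erase j)) hk₀er).symm
        have e2 := (Finset.add_sum_erase (Finset.univ.erase i)
          (fun l => b l (Xi l)) hk₀er).symm
        have e3 : ∑ l ∈ (Finset.univ.erase i).erase k₀, b l ((Xi l).erase j)
            = ∑ l ∈ (Finset.univ.erase i).erase k₀, b l (Xi l) := by
          refine Finset.sum_congr rfl fun l hl => ?_
          rw [Finset.erase_eq_of_notMem (hjother l (Finset.ne_of_mem_erase hl))]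
        rw [e1, e2, e3]
        ring
      have h1 := hkey k₀ hk₀i
      rw [hsum1, ← hWmXi i] at h1
      have h2 : b k₀ (Xi k₀) - b k₀ ((Xi k₀).erase j) ≤ charge j := by
        have hterm : (if j ∈ Xi k₀ then b k₀ (Xi k₀) - b k₀ ((Xi k₀).erase j) else 0)
            = b k₀ (Xi k₀) - b k₀ ((Xi k₀).erase j) := if_pos hk₀mem
        calc b k₀ (Xi k₀) - b k₀ ((Xi k₀).erase j)
            = (if j ∈ Xi k₀ then b k₀ (Xi k₀) - b k₀ ((Xi k₀).erase j) else 0) := hterm.symm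
          _ ≤ charge j := by
              refine Finset.single_le_sum (f := fun k =>
                if j ∈ Xi k then b k (Xi k) - b k ((Xi k).erase j) else 0) ?_ (Finset.mem_univ k₀)
              intro k _
              show (0:ℝ) ≤ if j ∈ Xi k then b k (Xi k) - b k ((Xi k).erase j) else 0
              by_cases hjk : j ∈ Xi k
              · rw [if_pos hjk]; exact htopnn k j
              · rw [if_neg hjk]
      linarith
    · push_neg at hex
      by_cases hexk : ∃ k : Fin n, k ≠ i
      · obtain ⟨k₀, hk₀⟩ := hexk
        have h1 := hkey k₀ hk₀
        have hsame : ∑ l ∈ Finset.univ.erase i, b l ((Xi l).erase j)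
            = ∑ l ∈ Finset.univ.erase i, b l (Xi l) := by
          refine Finset.sum_congr rfl fun l hl => ?_
          rw [Finset.erase_eq_of_notMem (hex l)]
        rw [hsame, ← hWmXi i] at h1
        have := hchargenn j
        linarith
      · push_neg at hexk
        have her : Finset.univ.erase i = (∅ : Finset (Fin n)) := by
          refine Finset.eq_empty_of_forall_notMem fun l hl => ?_
          exact (Finset.ne_of_mem_erase hl) (hexk l)
        have hz1 : Wminus b i (Finset.univ \ Xi i) = ∑ l ∈ Finset.univ.erase i, b l (Xi l) :=
          hWmXi i
        rw [her] at hz1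
        simp only [Finset.sum_empty] at hz1
        have hz2 : 0 ≤ Wminus b i ((Finset.univ \ Xi i).erase j) :=
          PoA.Wminus_nonneg hbnn i _
        have := hchargenn j
        linarith
  -- put the per-agent bounds together
  have hstep1 : OPT v ≤ (∑ i, v i (Xi i)) + ∑ i, ∑ j ∈ Xs i \ Xi i, charge j := by
    have h0 : OPT v = ∑ i, v i (Xs i) := hXs3
    rw [h0]
    have h1 : ∀ i : Fin n, v i (Xs i) ≤ v i (Xi i) + ∑ j ∈ Xs i \ Xi i, charge j := by
      intro i
      refine le_trans (hperi i) ?_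
      have := Finset.sum_le_sum (fun j hj => hqcharge i j hj)
      linarith
    calc ∑ i, v i (Xs i) ≤ ∑ i, (v i (Xi i) + ∑ j ∈ Xs i \ Xi i, charge j) :=
          Finset.sum_le_sum fun i _ => h1 i
      _ = (∑ i, v i (Xi i)) + ∑ i, ∑ j ∈ Xs i \ Xi i, charge j := by
          rw [Finset.sum_add_distrib]
  have hSWnn : 0 ≤ ∑ i, v i (Xi i) :=
    Finset.sum_nonneg fun i _ => (hv i).1.2.2 _
  rcases le_or_gt 2 n with hn2 | hn2
  · -- at least two agents: use the exposure bound
    have hstep2 : ∑ i, ∑ j ∈ Xs i \ Xi i, charge j ≤ ∑ j, charge j := by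
      have hswap : ∀ i : Fin n, ∑ j ∈ Xs i \ Xi i, charge j
          = ∑ j, (if j ∈ Xs i \ Xi i then charge j else 0) := by
        intro i
        rw [Finset.sum_ite_mem, Finset.univ_inter]
      calc ∑ i, ∑ j ∈ Xs i \ Xi i, charge j
          = ∑ i, ∑ j, (if j ∈ Xs i \ Xi i then charge j else 0) := by
            exact Finset.sum_congr rfl fun i _ => hswap i
        _ = ∑ j, ∑ i, (if j ∈ Xs i \ Xi i then charge j else 0) := Finset.sum_comm
        _ ≤ ∑ j, charge j := by
            refine Finset.sum_le_sum fun j _ => ?_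
            by_cases hex : ∃ i : Fin n, j ∈ Xs i \ Xi i
            · obtain ⟨i₀, hi₀⟩ := hex
              have hsingle : ∑ i, (if j ∈ Xs i \ Xi i then charge j else 0)
                  = (if j ∈ Xs i₀ \ Xi i₀ then charge j else 0) := by
                refine Finset.sum_eq_single i₀ ?_ ?_
                · intro l _ hl
                  rw [if_neg]
                  intro hcon
                  have h1 : j ∈ Xs i₀ := (Finset.mem_sdiff.1 hi₀).1
                  have h2 : j ∈ Xs l := (Finset.mem_sdiff.1 hcon).1
                  exact Finset.disjoint_left.1 (hXs1 l i₀ hl) h2 h1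
                · intro hcon
                  exact absurd (Finset.mem_univ i₀) hcon
              rw [hsingle, if_pos hi₀]
            · push_neg at hex
              have : ∑ i, (if j ∈ Xs i \ Xi i then charge j else 0) = 0 := by
                refine Finset.sum_eq_zero fun i _ => ?_
                rw [if_neg (hex i)]
              rw [this]
              exact hchargenn j
    have hstep3 : ∑ j, charge j ≤ (1 + γ) * ∑ i, v i (Xi i) := by
      have hswap : ∑ j, charge j
          = ∑ k, ∑ j, (if j ∈ Xi k then b k (Xi k) - b k ((Xi k).erase j) else 0) := by
        simp only [hchargedef]
        exact Finset.sum_comm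
      rw [hswap]
      have hper : ∀ k : Fin n,
          ∑ j, (if j ∈ Xi k then b k (Xi k) - b k ((Xi k).erase j) else 0)
            ≤ (1 + γ) * v k (Xi k) := by
        intro k
        have hdem := PoA.gs_inDemand_topmarg (hb k) (Xi k)
        have hpnn : ∀ j : Fin m, 0 ≤ (if j ∈ Xi k then b k (Xi k) - b k ((Xi k).erase j)
            else b k Finset.univ + 1) := by
          intro j
          by_cases hjk : j ∈ Xi k
          · rw [if_pos hjk]; exact htopnn k j
          · rw [if_neg hjk]
            have := (hb k).1.2.2 Finset.univ
            linarith
        have hbound := PoA.demand_price_bound M hM hVCG hγ (hb k) (hv k) (hexp k) hn2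
          hpnn hdem
        have heq : ∑ j ∈ Xi k, (if j ∈ Xi k then b k (Xi k) - b k ((Xi k).erase j)
            else b k Finset.univ + 1) = ∑ j, (if j ∈ Xi k then b k (Xi k)
              - b k ((Xi k).erase j) else 0) := by
          rw [Finset.sum_ite_mem, Finset.univ_inter]
          refine Finset.sum_congr rfl fun j hj => ?_
          rw [if_pos hj]
        rw [heq] at hbound
        exact hbound
      calc ∑ k, ∑ j, (if j ∈ Xi k then b k (Xi k) - b k ((Xi k).erase j) else 0)
          ≤ ∑ k, (1 + γ) * v k (Xi k) := Finset.sum_le_sum fun k _ => hper k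
        _ = (1 + γ) * ∑ i, v i (Xi i) := by rw [Finset.mul_sum]
    calc OPT v ≤ (∑ i, v i (Xi i)) + ∑ i, ∑ j ∈ Xs i \ Xi i, charge j := hstep1
      _ ≤ (∑ i, v i (Xi i)) + ∑ j, charge j := by linarith
      _ ≤ (∑ i, v i (Xi i)) + (1 + γ) * ∑ i, v i (Xi i) := by linarith
      _ = (2 + γ) * ∑ i, v i (Xi i) := by ring
  · -- fewer than two agents
    have hzero : ∑ i, ∑ j ∈ Xs i \ Xi i, charge j ≤ 0 := by
      refine Finset.sum_nonpos fun i _ => ?_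
      refine Finset.sum_nonpos fun j hj => ?_
      have hjXi : j ∉ Xi i := (Finset.mem_sdiff.1 hj).2
      have : charge j = 0 := by
        refine Finset.sum_eq_zero fun k _ => ?_
        have hki : k = i := by
          have hk := k.2
          have hi := i.2
          ext
          omega
        rw [if_neg (hki ▸ hjXi)]
      rw [this]
    have hγSW : 0 ≤ (1 + γ) * ∑ i, v i (Xi i) := by
      have : (0:ℝ) ≤ 1 + γ := by linarith
      exact mul_nonneg this hSWnn
    calc OPT v ≤ (∑ i, v i (Xi i)) + ∑ i, ∑ j ∈ Xs i \ Xi i, charge j := hstep1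
      _ ≤ ∑ i, v i (Xi i) := by linarith
      _ ≤ (2 + γ) * ∑ i, v i (Xi i) := by nlinarith
end
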